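/- arXiv:2304.11050 — 6 statements merged into one kernel-verified Lean document; each statement's English description precedes it below -/
import Mathlib

section
/- For every complex number α, the function u_α(t,x) = α · e^{i|α|² log t} · t^{-1/2} · e^{i x²/(4t)} satisfies the focusing 1D cubic Schrödinger equation i ∂_t u + ∂_x² u + |u|² u = 0 at every point (t,x) with t > 0 and x ∈ ℝ. -/
noncomputable def uAlpha (α : ℂ) (t x : ℝ) : ℂ :=
  α * Complex.exp (Complex.I * ((‖α‖ : ℝ) : ℂ)^2 * ((Real.log t : ℝ) : ℂ)) *
    (1 / ((Real.sqrt t : ℝ) : ℂ)) * Complex.exp (Complex.I * (x : ℂ)^2 / (4 * (t : ℂ)))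

open Complex Real

lemma hderiv_t (α : ℂ) (x t : ℝ) (ht : 0 < t) :
    HasDerivAt (fun s : ℝ => uAlpha α s x)
      ((α * Complex.exp (Complex.I * ((‖α‖ : ℝ) : ℂ)^2 * ((Real.log t : ℝ) : ℂ)) *
          (Complex.I * ((‖α‖ : ℝ) : ℂ)^2 * (1/(t:ℂ)))) *
        (1 / ((Real.sqrt t : ℝ) : ℂ)) * Complex.exp (Complex.I * (x : ℂ)^2 / (4 * (t : ℂ)))
      + (α * Complex.exp (Complex.I * ((‖α‖ : ℝ) : ℂ)^2 * ((Real.log t : ℝ) : ℂ))) *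
        (-( ((1/(2*Real.sqrt t) : ℝ) : ℂ) / ((Real.sqrt t : ℝ) : ℂ)^2)) *
        Complex.exp (Complex.I * (x : ℂ)^2 / (4 * (t : ℂ)))
      + uAlpha α t x * (-(Complex.I * (x:ℂ)^2 * 4 / (4*(t:ℂ))^2))) t := by
  have hrt : Real.sqrt t ≠ 0 := (Real.sqrt_pos.mpr ht).ne'
  have hrtC : ((Real.sqrt t : ℝ) : ℂ) ≠ 0 := Complex.ofReal_ne_zero.mpr hrt
  have h4t : (4 * (t:ℂ)) ≠ 0 := by
    simp [ht.ne']
  -- factor 1: α * exp(c * log s)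
  have h1 : HasDerivAt (fun s : ℝ =>
      α * Complex.exp (Complex.I * ((‖α‖ : ℝ) : ℂ)^2 * ((Real.log s : ℝ) : ℂ)))
      (α * Complex.exp (Complex.I * ((‖α‖ : ℝ) : ℂ)^2 * ((Real.log t : ℝ) : ℂ)) *
        (Complex.I * ((‖α‖ : ℝ) : ℂ)^2 * (1/(t:ℂ)))) t := by
    have hl : HasDerivAt (fun s : ℝ => ((Real.log s : ℝ) : ℂ)) (((t⁻¹ : ℝ)) : ℂ) t :=
      (Real.hasDerivAt_log ht.ne').ofReal_comp
    have := ((hl.const_mul (Complex.I * ((‖α‖ : ℝ) : ℂ)^2)).cexp).const_mul α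
    convert this using 1
    · rfl
    push_cast
    ring
  -- factor 2: 1 / sqrt s
  have h2 : HasDerivAt (fun s : ℝ => (1 / ((Real.sqrt s : ℝ) : ℂ)))
      (-( ((1/(2*Real.sqrt t) : ℝ) : ℂ) / ((Real.sqrt t : ℝ) : ℂ)^2)) t := by
    have hs : HasDerivAt (fun s : ℝ => ((Real.sqrt s : ℝ) : ℂ))
        ((1/(2*Real.sqrt t) : ℝ) : ℂ) t := (Real.hasDerivAt_sqrt ht.ne').ofReal_comp
    have := (hasDerivAt_inv hrtC).comp t hs
    simp only [Function.comp_def] at this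
    rw [show (fun s : ℝ => 1/((Real.sqrt s : ℝ):ℂ)) = (fun s : ℝ => ((Real.sqrt s : ℝ):ℂ)⁻¹) from funext fun s => one_div _]
    convert this using 1
    · rfl
    field_simp
  -- factor 3: exp (I x^2 / (4 s))
  have h3 : HasDerivAt (fun s : ℝ => Complex.exp (Complex.I * (x : ℂ)^2 / (4 * (s : ℂ))))
      (Complex.exp (Complex.I * (x : ℂ)^2 / (4 * (t : ℂ))) *
        (-(Complex.I * (x:ℂ)^2 * 4 / (4*(t:ℂ))^2))) t := by
    have hid : HasDerivAt (fun s : ℝ => ((s:ℝ) : ℂ)) ((1:ℝ) : ℂ) t :=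
      (hasDerivAt_id t).ofReal_comp
    have h4 : HasDerivAt (fun s : ℝ => (4 * (s : ℂ))) 4 t := by
      simpa using hid.const_mul (4:ℂ)
    have hin : HasDerivAt (fun s : ℝ => Complex.I * (x : ℂ)^2 / (4 * (s : ℂ)))
        (-(Complex.I * (x:ℂ)^2 * 4 / (4*(t:ℂ))^2)) t := by
      have := ((hasDerivAt_inv h4t).comp t h4).const_mul (Complex.I * (x : ℂ)^2)
      simp only [Function.comp_def] at this
      rw [show (fun s : ℝ => Complex.I * (x : ℂ)^2 / (4 * (s : ℂ))) = (fun s : ℝ => Complex.I * (x : ℂ)^2 * (4 * (s : ℂ))⁻¹) from funext fun s => div_eq_mul_inv _ _]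
      convert this using 1
      · rfl
      field_simp
    simpa [mul_comm] using hin.cexp
  have := (h1.mul h2).mul h3
  convert this using 1
  · rfl
  · rfl
  unfold uAlpha
  simp only [Pi.mul_apply]
  ring

lemma hderiv_x (α : ℂ) (t : ℝ) (ht : 0 < t) (y : ℝ) :
    HasDerivAt (fun y : ℝ => uAlpha α t y)
      (uAlpha α t y * (Complex.I * (y:ℂ) / (2 * (t:ℂ)))) y := by
  have htC : ((t:ℝ):ℂ) ≠ 0 := Complex.ofReal_ne_zero.mpr ht.ne'
  have hpow : HasDerivAt (fun z : ℝ => ((z:ℂ))^2) ((2*y : ℝ) : ℂ) y := by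
    have := (hasDerivAt_pow 2 y).ofReal_comp
    simp only [Complex.ofReal_pow] at this
    convert this using 1
    push_cast
    ring
  have hg : HasDerivAt (fun z : ℝ => Complex.I * (z:ℂ)^2 / (4 * (t:ℂ)))
      (Complex.I * ((2*y:ℝ):ℂ) / (4 * (t:ℂ))) y :=
    (hpow.const_mul Complex.I).div_const _
  have := (hg.cexp).const_mul
    (α * Complex.exp (Complex.I * ((‖α‖ : ℝ) : ℂ)^2 * ((Real.log t : ℝ) : ℂ)) *
      (1 / ((Real.sqrt t : ℝ) : ℂ)))
  convert this using 1
  · rfl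
  · rfl
  unfold uAlpha
  push_cast
  field_simp
  ring

lemma hderiv_xx (α : ℂ) (t x : ℝ) (ht : 0 < t) :
    HasDerivAt (fun y : ℝ => uAlpha α t y * (Complex.I * (y:ℂ) / (2 * (t:ℂ))))
      ((uAlpha α t x * (Complex.I * (x:ℂ) / (2 * (t:ℂ)))) * (Complex.I * (x:ℂ) / (2 * (t:ℂ)))
        + uAlpha α t x * (Complex.I / (2 * (t:ℂ)))) x := by
  have hid : HasDerivAt (fun z : ℝ => ((z:ℝ) : ℂ)) ((1:ℝ) : ℂ) x :=
    (hasDerivAt_id x).ofReal_comp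
  have hlin : HasDerivAt (fun z : ℝ => Complex.I * (z:ℂ) / (2 * (t:ℂ)))
      (Complex.I / (2 * (t:ℂ))) x := by
    have := (hid.const_mul Complex.I).div_const (2 * (t:ℂ))
    simpa using this
  exact (hderiv_x α t ht x).mul hlin

lemma habs (α : ℂ) (t x : ℝ) (ht : 0 < t) :
    ‖uAlpha α t x‖ = ‖α‖ / Real.sqrt t := by
  have e1 : Complex.I * ((‖α‖ : ℝ) : ℂ)^2 * ((Real.log t : ℝ) : ℂ)
      = ((‖α‖^2 * Real.log t : ℝ) : ℂ) * Complex.I := by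
    push_cast; ring
  have e2 : Complex.I * (x:ℂ)^2 / (4 * (t:ℂ)) = ((x^2/(4*t) : ℝ) : ℂ) * Complex.I := by
    have htC : ((t:ℝ):ℂ) ≠ 0 := Complex.ofReal_ne_zero.mpr ht.ne'
    push_cast
    field_simp
  unfold uAlpha
  rw [e1, e2, norm_mul, norm_mul, norm_mul, Complex.norm_exp_ofReal_mul_I,
    Complex.norm_exp_ofReal_mul_I, norm_div, norm_one, Complex.norm_real,
    Real.norm_of_nonneg (Real.sqrt_nonneg t)]
  ring

/-- for every `α ∈ ℂ`, the explicit function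
`u_α(t,x) = α e^{i|α|² log t} t^{-1/2} e^{i x²/(4t)}` solves the focusing 1D cubic NLS
`i ∂_t u + ∂_x² u + |u|² u = 0` at every point with `t > 0`. -/
theorem stmt0 (α : ℂ) (t x : ℝ) (ht : 0 < t) :
    Complex.I * deriv (fun s : ℝ => uAlpha α s x) t
      + deriv (deriv (fun y : ℝ => uAlpha α t y)) x
      + ((‖uAlpha α t x‖ : ℝ) : ℂ)^2 * uAlpha α t x = 0 := by
  have hrt : Real.sqrt t ≠ 0 := (Real.sqrt_pos.mpr ht).ne'
  have hrtC : ((Real.sqrt t : ℝ) : ℂ) ≠ 0 := Complex.ofReal_ne_zero.mpr hrt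
  have htC : ((t:ℝ):ℂ) ≠ 0 := Complex.ofReal_ne_zero.mpr ht.ne'
  have hx1 : deriv (fun y : ℝ => uAlpha α t y)
      = fun y : ℝ => uAlpha α t y * (Complex.I * (y:ℂ) / (2 * (t:ℂ))) := by
    funext y; exact (hderiv_x α t ht y).deriv
  rw [(hderiv_t α x t ht).deriv, hx1, (hderiv_xx α t x ht).deriv, habs α t x ht]
  have habs2 : (((‖α‖ / Real.sqrt t : ℝ)) : ℂ)^2 = ((‖α‖ : ℝ):ℂ)^2 / (t:ℂ) := by
    push_cast
    rw [div_pow, ← Complex.ofReal_pow, ← Complex.ofReal_pow, Real.sq_sqrt ht.le]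
  rw [habs2]
  have hr2 : (((Real.sqrt t : ℝ)) : ℂ)^2 = (t:ℂ) := by
    rw [← Complex.ofReal_pow, Real.sq_sqrt ht.le]
  unfold uAlpha
  set E1 := Complex.exp (Complex.I * ((‖α‖ : ℝ) : ℂ)^2 * ((Real.log t : ℝ) : ℂ)) with hE1
  set E2 := Complex.exp (Complex.I * (x : ℂ)^2 / (4 * (t : ℂ))) with hE2
  rw [← hr2]
  field_simp [hrtC]
  ring_nf
  push_cast
  field_simp [hrtC]
  ring_nf
  rw [Complex.I_sq]
  ring
end

section
/- Symmetrization identity: let B : ℤ → ℂ satisfy Σ_{k∈ℤ} |B_k| < ∞, let a : ℤ → ℝ be bounded, and let t ∈ ℝ. For (k, j₁, j₂) ∈ ℤ³ set j₃ := k − j₁ + j₂, ω := (k − j₁)(j₁ − j₂), and T(k,j₁,j₂) := e^{−i t ω} · B_{j₁} · conj(B_{j₂}) · B_{j₃} · conj(B_k). Then the family (a(k) − a(j₁) + a(j₂) − a(j₃)) · T(k,j₁,j₂), indexed by (k,j₁,j₂) ∈ ℤ³, is absolutely summable, the family a(k) · T(k,j₁,j₂) is absolutely summable with sum S, and Σ_{(k,j₁,j₂)∈ℤ³}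 (a(k) − a(j₁) + a(j₂) − a(j₃)) · T(k,j₁,j₂) = 2 (S − conj(S)). Moreover, every term of the left-hand sum with ω = 0 vanishes, so the left-hand sum equals the same sum restricted to triples with (k − j₁)(j₁ − j₂) ≠ 0. -/
/-- The elementary interaction term
`T(k,j₁,j₂) = e^{-i t ω} B_{j₁} conj(B_{j₂}) B_{j₃} conj(B_k)` with `j₃ = k - j₁ + j₂`
and `ω = (k - j₁)(j₁ - j₂)`. -/
noncomputable def interactionTerm (B : ℤ → ℂ) (t : ℝ) (p : ℤ × ℤ × ℤ) : ℂ :=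
  Complex.exp (-Complex.I * (t : ℂ) * (((p.1 - p.2.1) * (p.2.1 - p.2.2) : ℤ) : ℂ))
    * B p.2.1 * (starRingEnd ℂ) (B p.2.2) * B (p.1 - p.2.1 + p.2.2)
    * (starRingEnd ℂ) (B p.1)

/-- The alternating coefficient `a(k) - a(j₁) + a(j₂) - a(j₃)` with `j₃ = k - j₁ + j₂`. -/
def altCoeff (a : ℤ → ℝ) (p : ℤ × ℤ × ℤ) : ℝ :=
  a p.1 - a p.2.1 + a p.2.2 - a (p.1 - p.2.1 + p.2.2)

lemma norm_phase (t : ℝ) (n : ℤ) :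
    ‖Complex.exp (-Complex.I * (t : ℂ) * (n : ℂ))‖ = 1 := by
  rw [Complex.norm_exp]
  have : (-Complex.I * (t : ℂ) * (n : ℂ)).re = 0 := by
    simp [Complex.mul_re, Complex.mul_im]
  rw [this, Real.exp_zero]

lemma normT (B : ℤ → ℂ) (t : ℝ) (p : ℤ × ℤ × ℤ) :
    ‖interactionTerm B t p‖
      = ‖B p.2.1‖ * ‖B p.2.2‖ * ‖B (p.1 - p.2.1 + p.2.2)‖ * ‖B p.1‖ := by
  unfold interactionTerm
  rw [norm_mul, norm_mul, norm_mul, norm_mul, norm_phase, one_mul,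
    RCLike.norm_conj, RCLike.norm_conj]

set_option maxHeartbeats 1000000 in
lemma summable_normT (B : ℤ → ℂ) (hB : Summable fun k : ℤ => ‖B k‖) (t : ℝ) :
    Summable fun p : ℤ × ℤ × ℤ => ‖interactionTerm B t p‖ := by
  have h2 : Summable fun q : ℤ × ℤ => ‖B q.1‖ * ‖B q.2‖ :=
    hB.mul_of_nonneg hB (fun _ => norm_nonneg _) (fun _ => norm_nonneg _)
  have h3 : Summable fun p : ℤ × ℤ × ℤ => ‖B p.1‖ * (‖B p.2.1‖ * ‖B p.2.2‖) :=
    hB.mul_of_nonneg h2 (fun _ => norm_nonneg _)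
      (fun _ => mul_nonneg (norm_nonneg _) (norm_nonneg _))
  set S₀ := ∑' k : ℤ, ‖B k‖ with hS₀
  apply Summable.of_nonneg_of_le (fun _ => norm_nonneg _) _ (h3.mul_left S₀)
  intro p
  rw [normT]
  have hj3 : ‖B (p.1 - p.2.1 + p.2.2)‖ ≤ S₀ := Summable.le_tsum hB _ (fun _ _ => norm_nonneg _)
  calc ‖B p.2.1‖ * ‖B p.2.2‖ * ‖B (p.1 - p.2.1 + p.2.2)‖ * ‖B p.1‖
      = ‖B (p.1 - p.2.1 + p.2.2)‖ * (‖B p.1‖ * (‖B p.2.1‖ * ‖B p.2.2‖)) := by ring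
    _ ≤ S₀ * (‖B p.1‖ * (‖B p.2.1‖ * ‖B p.2.2‖)) :=
        mul_le_mul_of_nonneg_right hj3 (by positivity)

lemma summable_coef (B : ℤ → ℂ) (hB : Summable fun k : ℤ => ‖B k‖) (t : ℝ)
    (c : ℤ × ℤ × ℤ → ℝ) (C : ℝ) (hc : ∀ p, |c p| ≤ C) :
    Summable fun p : ℤ × ℤ × ℤ => ‖((c p : ℝ) : ℂ) * interactionTerm B t p‖ := by
  apply Summable.of_nonneg_of_le (fun _ => norm_nonneg _) _
    ((summable_normT B hB t).mul_left C)
  intro p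
  rw [norm_mul, Complex.norm_real, Real.norm_eq_abs]
  exact mul_le_mul_of_nonneg_right (hc p) (norm_nonneg _)

-- involutions
lemma sigma_inv : Function.Involutive
    (fun p : ℤ × ℤ × ℤ => (p.2.1, p.1, p.1 - p.2.1 + p.2.2)) := by
  intro p; obtain ⟨k, j₁, j₂⟩ := p; dsimp only; simp only [Prod.mk.injEq, true_and, and_true]; ring

lemma tau_inv : Function.Involutive
    (fun p : ℤ × ℤ × ℤ => (p.2.2, p.1 - p.2.1 + p.2.2, p.1)) := by
  intro p; obtain ⟨k, j₁, j₂⟩ := p; dsimp only; simp only [Prod.mk.injEq, true_and, and_true]; ring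

lemma rho_inv : Function.Involutive
    (fun p : ℤ × ℤ × ℤ => (p.1 - p.2.1 + p.2.2, p.2.2, p.2.1)) := by
  intro p; obtain ⟨k, j₁, j₂⟩ := p; dsimp only; simp only [Prod.mk.injEq, true_and, and_true]; ring

lemma T_sigma (B : ℤ → ℂ) (t : ℝ) (p : ℤ × ℤ × ℤ) :
    interactionTerm B t (p.2.1, p.1, p.1 - p.2.1 + p.2.2)
      = (starRingEnd ℂ) (interactionTerm B t p) := by
  obtain ⟨k, j₁, j₂⟩ := p
  simp only [interactionTerm]
  rw [map_mul, map_mul, map_mul, map_mul, ← Complex.exp_conj]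
  have h1 : j₁ - k + (k - j₁ + j₂) = j₂ := by ring
  rw [h1]
  have h2 : (starRingEnd ℂ) (-Complex.I * (t : ℂ) * (((k - j₁) * (j₁ - j₂) : ℤ) : ℂ))
      = -Complex.I * (t : ℂ) * (((j₁ - k) * (k - (k - j₁ + j₂)) : ℤ) : ℂ) := by
    push_cast
    simp only [map_mul, map_neg, Complex.conj_I, Complex.conj_ofReal, map_sub, map_intCast]
    ring
  rw [h2, Complex.conj_conj, Complex.conj_conj]
  ring

lemma T_tau (B : ℤ → ℂ) (t : ℝ) (p : ℤ × ℤ × ℤ) :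
    interactionTerm B t (p.2.2, p.1 - p.2.1 + p.2.2, p.1)
      = interactionTerm B t p := by
  obtain ⟨k, j₁, j₂⟩ := p
  simp only [interactionTerm]
  have h1 : j₂ - (k - j₁ + j₂) + k = j₁ := by ring
  have h2 : (((j₂ - (k - j₁ + j₂)) * ((k - j₁ + j₂) - k) : ℤ) : ℂ)
      = (((k - j₁) * (j₁ - j₂) : ℤ) : ℂ) := by push_cast; ring
  rw [h1, h2]
  ring

lemma T_rho (B : ℤ → ℂ) (t : ℝ) (p : ℤ × ℤ × ℤ) :
    interactionTerm B t (p.1 - p.2.1 + p.2.2, p.2.2, p.2.1)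
      = (starRingEnd ℂ) (interactionTerm B t p) := by
  obtain ⟨k, j₁, j₂⟩ := p
  simp only [interactionTerm]
  rw [map_mul, map_mul, map_mul, map_mul, ← Complex.exp_conj]
  have h1 : (k - j₁ + j₂) - j₂ + j₁ = k := by ring
  rw [h1]
  have h2 : (starRingEnd ℂ) (-Complex.I * (t : ℂ) * (((k - j₁) * (j₁ - j₂) : ℤ) : ℂ))
      = -Complex.I * (t : ℂ) * ((((k - j₁ + j₂) - j₂) * (j₂ - j₁) : ℤ) : ℂ) := by
    push_cast
    simp only [map_mul, map_neg, Complex.conj_I, Complex.conj_ofReal, map_sub, map_intCast]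
    ring
  rw [h2, Complex.conj_conj, Complex.conj_conj]
  ring

/-- symmetrization identity: for `B` absolutely summable, `a` bounded and
`t ∈ ℝ`, the family `(a(k) - a(j₁) + a(j₂) - a(j₃)) T(k,j₁,j₂)` is absolutely summable,
the family `a(k) T(k,j₁,j₂)` is absolutely summable with sum `S`, the first sum equals
`2 (S - conj S)`, every term with `ω = (k-j₁)(j₁-j₂) = 0` vanishes, and the first sum
equals the same sum restricted to triples with `ω ≠ 0`. -/
theorem stmt6 (B : ℤ → ℂ) (hB : Summable fun k : ℤ => ‖B k‖)
    (a : ℤ → ℝ) (C : ℝ) (ha : ∀ k : ℤ, |a k| ≤ C) (t : ℝ) :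
    (Summable fun p : ℤ × ℤ × ℤ => ‖((altCoeff a p : ℝ) : ℂ) * interactionTerm B t p‖)
    ∧ (Summable fun p : ℤ × ℤ × ℤ => ‖((a p.1 : ℝ) : ℂ) * interactionTerm B t p‖)
    ∧ (∑' p : ℤ × ℤ × ℤ, ((altCoeff a p : ℝ) : ℂ) * interactionTerm B t p
        = 2 * ((∑' p : ℤ × ℤ × ℤ, ((a p.1 : ℝ) : ℂ) * interactionTerm B t p)
            - (starRingEnd ℂ) (∑' p : ℤ × ℤ × ℤ, ((a p.1 : ℝ) : ℂ) * interactionTerm B t p)))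
    ∧ (∀ p : ℤ × ℤ × ℤ, (p.1 - p.2.1) * (p.2.1 - p.2.2) = 0 →
        ((altCoeff a p : ℝ) : ℂ) * interactionTerm B t p = 0)
    ∧ (∑' p : ℤ × ℤ × ℤ, ((altCoeff a p : ℝ) : ℂ) * interactionTerm B t p
        = ∑' q : {p : ℤ × ℤ × ℤ // (p.1 - p.2.1) * (p.2.1 - p.2.2) ≠ 0},
            ((altCoeff a q.1 : ℝ) : ℂ) * interactionTerm B t q.1) := by
  -- basic summability facts
  have hAlt : ∀ p : ℤ × ℤ × ℤ, |altCoeff a p| ≤ 4 * C := by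
    intro p
    have h1 := abs_le.mp (ha p.1)
    have h2 := abs_le.mp (ha p.2.1)
    have h3 := abs_le.mp (ha p.2.2)
    have h4 := abs_le.mp (ha (p.1 - p.2.1 + p.2.2))
    rw [abs_le]; unfold altCoeff; constructor <;> linarith
  have hsAlt := summable_coef B hB t (altCoeff a) (4 * C) hAlt
  have hs0 := summable_coef B hB t (fun p => a p.1) C (fun p => ha p.1)
  have hs1 := summable_coef B hB t (fun p => a p.2.1) C (fun p => ha p.2.1)
  have hs2 := summable_coef B hB t (fun p => a p.2.2) C (fun p => ha p.2.2)
  have hs3 := summable_coef B hB t (fun p => a (p.1 - p.2.1 + p.2.2)) C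
    (fun p => ha (p.1 - p.2.1 + p.2.2))
  have h0 : Summable fun p : ℤ × ℤ × ℤ => ((a p.1 : ℝ) : ℂ) * interactionTerm B t p :=
    hs0.of_norm
  have h1 : Summable fun p : ℤ × ℤ × ℤ => ((a p.2.1 : ℝ) : ℂ) * interactionTerm B t p :=
    hs1.of_norm
  have h2 : Summable fun p : ℤ × ℤ × ℤ => ((a p.2.2 : ℝ) : ℂ) * interactionTerm B t p :=
    hs2.of_norm
  have h3 : Summable fun p : ℤ × ℤ × ℤ =>
      ((a (p.1 - p.2.1 + p.2.2) : ℝ) : ℂ) * interactionTerm B t p := hs3.of_norm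
  set S := ∑' p : ℤ × ℤ × ℤ, ((a p.1 : ℝ) : ℂ) * interactionTerm B t p with hS
  -- symmetrization identities
  have key1 : (∑' p : ℤ × ℤ × ℤ, ((a p.2.1 : ℝ) : ℂ) * interactionTerm B t p)
      = (starRingEnd ℂ) S := by
    have hconj : (starRingEnd ℂ)
        (∑' p : ℤ × ℤ × ℤ, ((a p.2.1 : ℝ) : ℂ) * interactionTerm B t p) = S := by
      calc (starRingEnd ℂ) (∑' p : ℤ × ℤ × ℤ, ((a p.2.1 : ℝ) : ℂ) * interactionTerm B t p)
          = ∑' p : ℤ × ℤ × ℤ, (starRingEnd ℂ)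
              (((a p.2.1 : ℝ) : ℂ) * interactionTerm B t p) := by
            exact tsum_star
        _ = ∑' p : ℤ × ℤ × ℤ, (fun q : ℤ × ℤ × ℤ => ((a q.1 : ℝ) : ℂ) * interactionTerm B t q)
              ((Function.Involutive.toPerm _ sigma_inv) p) := by
            apply tsum_congr; intro p
            simp only [Function.Involutive.coe_toPerm, map_mul, Complex.conj_ofReal]
            rw [T_sigma]
        _ = S := by rw [hS]; exact Equiv.tsum_eq (Function.Involutive.toPerm _ sigma_inv) (fun q : ℤ × ℤ × ℤ => ((a q.1 : ℝ) : ℂ) * interactionTerm B t q)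
    rw [← hconj, Complex.conj_conj]
  have key2 : (∑' p : ℤ × ℤ × ℤ, ((a p.2.2 : ℝ) : ℂ) * interactionTerm B t p) = S := by
    calc (∑' p : ℤ × ℤ × ℤ, ((a p.2.2 : ℝ) : ℂ) * interactionTerm B t p)
        = ∑' p : ℤ × ℤ × ℤ, (fun q : ℤ × ℤ × ℤ => ((a q.1 : ℝ) : ℂ) * interactionTerm B t q)
            ((Function.Involutive.toPerm _ tau_inv) p) := by
          apply tsum_congr; intro p
          simp only [Function.Involutive.coe_toPerm]
          rw [T_tau]
      _ = S := by rw [hS]; exact Equiv.tsum_eq (Function.Involutive.toPerm _ tau_inv) (fun q : ℤ × ℤ × ℤ => ((a q.1 : ℝ) : ℂ) * interactionTerm B t q)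
  have key3 : (∑' p : ℤ × ℤ × ℤ, ((a (p.1 - p.2.1 + p.2.2) : ℝ) : ℂ) * interactionTerm B t p)
      = (starRingEnd ℂ) S := by
    have hconj : (starRingEnd ℂ)
        (∑' p : ℤ × ℤ × ℤ, ((a (p.1 - p.2.1 + p.2.2) : ℝ) : ℂ) * interactionTerm B t p)
          = S := by
      calc (starRingEnd ℂ) (∑' p : ℤ × ℤ × ℤ,
              ((a (p.1 - p.2.1 + p.2.2) : ℝ) : ℂ) * interactionTerm B t p)
          = ∑' p : ℤ × ℤ × ℤ, (starRingEnd ℂ)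
              (((a (p.1 - p.2.1 + p.2.2) : ℝ) : ℂ) * interactionTerm B t p) := by
            exact tsum_star
        _ = ∑' p : ℤ × ℤ × ℤ, (fun q : ℤ × ℤ × ℤ => ((a q.1 : ℝ) : ℂ) * interactionTerm B t q)
              ((Function.Involutive.toPerm _ rho_inv) p) := by
            apply tsum_congr; intro p
            simp only [Function.Involutive.coe_toPerm, map_mul, Complex.conj_ofReal]
            rw [T_rho]
        _ = S := by rw [hS]; exact Equiv.tsum_eq (Function.Involutive.toPerm _ rho_inv) (fun q : ℤ × ℤ × ℤ => ((a q.1 : ℝ) : ℂ) * interactionTerm B t q)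
    rw [← hconj, Complex.conj_conj]
  -- the main sum
  have main : ∑' p : ℤ × ℤ × ℤ, ((altCoeff a p : ℝ) : ℂ) * interactionTerm B t p
      = 2 * (S - (starRingEnd ℂ) S) := by
    have hsplit : ∀ p : ℤ × ℤ × ℤ,
        ((altCoeff a p : ℝ) : ℂ) * interactionTerm B t p
          = (((a p.1 : ℝ) : ℂ) * interactionTerm B t p
              - ((a p.2.1 : ℝ) : ℂ) * interactionTerm B t p
              + ((a p.2.2 : ℝ) : ℂ) * interactionTerm B t p)
              - ((a (p.1 - p.2.1 + p.2.2) : ℝ) : ℂ) * interactionTerm B t p := by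
      intro p; unfold altCoeff; push_cast; ring
    rw [tsum_congr hsplit, Summable.tsum_sub (((h0.sub h1).add h2)) h3,
      Summable.tsum_add (h0.sub h1) h2, Summable.tsum_sub h0 h1, key1, key2, key3]
    ring
  -- vanishing for ω = 0
  have vanish : ∀ p : ℤ × ℤ × ℤ, (p.1 - p.2.1) * (p.2.1 - p.2.2) = 0 →
      ((altCoeff a p : ℝ) : ℂ) * interactionTerm B t p = 0 := by
    intro p hp
    obtain ⟨k, j₁, j₂⟩ := p
    have : altCoeff a (k, j₁, j₂) = 0 := by
      rcases mul_eq_zero.mp hp with h | h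
      · have hk : k = j₁ := sub_eq_zero.mp h
        subst hk
        have e : k - k + j₂ = j₂ := by ring
        simp [altCoeff, e]
      · have hk : j₁ = j₂ := sub_eq_zero.mp h
        subst hk
        have e : k - j₁ + j₁ = k := by ring
        simp [altCoeff, e]
    rw [this]
    simp
  refine ⟨hsAlt, hs0, main, vanish, ?_⟩
  refine (tsum_subtype_eq_of_support_subset ?_).symm
  intro p hp
  simp only [Function.mem_support] at hp
  intro h0
  exact hp (vanish p h0)
end

section
/- Conservation of mass for the Fourier-mode system: let T > 1, let h : ℤ → [0,∞) satisfy Σ_{k∈ℤ} h_k < ∞, and let B_k : [1,T] → ℂ (k ∈ ℤ) be differentiable functions such that |B_k(t)| ≤ h_k for all k ∈ ℤ and t ∈ [1,T], and such that for every k ∈ ℤ and t ∈ [1,T] one has i · B_k'(t) = (1/t) · Σ_{(j₁,j₂)∈ℤ²} e^{−i t (k−j₁)(j₁−j₂)} · B_{j₁}(t) · conj(B_{j₂}(t)) · B_{k−j₁+j₂}(t), the sum converging absolutely. Then Σ_{k∈ℤ} |B_k(t)|² = Σ_{k∈ℤ} |B_k(1)|² for every t ∈ [1,T]. -/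
set_option maxHeartbeats 1000000

open Set Filter Topology

lemma tsum_hasDerivWithinAt {ι : Type*} {f f' : ι → ℝ → ℝ} {u : ι → ℝ} {s : Set ℝ}
    (hs : Convex ℝ s) (hu : Summable u)
    (hf : ∀ i, ∀ x ∈ s, HasDerivWithinAt (f i) (f' i x) s x)
    (hf' : ∀ i, ∀ x ∈ s, ‖f' i x‖ ≤ u i)
    (hf0 : ∀ x ∈ s, Summable (fun i => f i x))
    {x : ℝ} (hx : x ∈ s) :
    HasDerivWithinAt (fun y => ∑' i, f i y) (∑' i, f' i x) s x := by
  have hsf' : ∀ y ∈ s, Summable (fun i => f' i y) := fun y hy =>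
    Summable.of_norm_bounded hu (fun i => hf' i y hy)
  rw [hasDerivWithinAt_iff_isLittleO, Asymptotics.isLittleO_iff]
  intro ε hε
  have hδ : 0 < ε / 3 := by linarith
  obtain ⟨F, hF⟩ : ∃ F : Finset ι, ∑' i : {i // i ∉ F}, u i < ε / 3 :=
    ((tendsto_tsum_compl_atTop_zero u).eventually_lt_const hδ).exists
  have husub : Summable (fun i : {i // i ∉ F} => u i) := hu.subtype _
  have hg : HasDerivWithinAt (fun y => ∑ i ∈ F, f i y) (∑ i ∈ F, f' i x) s x :=
    HasDerivWithinAt.fun_sum (fun i _ => hf i x hx)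
  rw [hasDerivWithinAt_iff_isLittleO, Asymptotics.isLittleO_iff] at hg
  filter_upwards [hg hδ, self_mem_nhdsWithin] with y hy hys
  have tail1 : ‖∑' i : {i // i ∉ F}, (f i y - f i x)‖ ≤ (∑' i : {i // i ∉ F}, u i) * ‖y - x‖ := by
    refine tsum_of_norm_bounded (husub.hasSum.mul_right _) (fun i => ?_)
    exact hs.norm_image_sub_le_of_norm_hasDerivWithin_le (hf i) (fun z hz => hf' i z hz) hx hys
  have tail2 : ‖∑' i : {i // i ∉ F}, f' i x‖ ≤ ∑' i : {i // i ∉ F}, u i :=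
    tsum_of_norm_bounded husub.hasSum (fun i => hf' i x hx)
  have hsum_y := hf0 y hys
  have hsum_x := hf0 x hx
  have hsplit_y : ∑' i, f i y = (∑ i ∈ F, f i y) + ∑' i : {i // i ∉ F}, f i y :=
    (Summable.sum_add_tsum_compl hsum_y).symm
  have hsplit_x : ∑' i, f i x = (∑ i ∈ F, f i x) + ∑' i : {i // i ∉ F}, f i x :=
    (Summable.sum_add_tsum_compl hsum_x).symm
  have hsplit_d : ∑' i, f' i x = (∑ i ∈ F, f' i x) + ∑' i : {i // i ∉ F}, f' i x :=
    (Summable.sum_add_tsum_compl (hsf' x hx)).symm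
  have hsub : (∑' i : {i // i ∉ F}, f i y) - (∑' i : {i // i ∉ F}, f i x)
      = ∑' i : {i // i ∉ F}, (f i y - f i x) :=
    (Summable.tsum_sub (hsum_y.subtype _) (hsum_x.subtype _)).symm
  have key : (∑' i, f i y) - (∑' i, f i x) - (y - x) • (∑' i, f' i x)
      = ((∑ i ∈ F, f i y) - (∑ i ∈ F, f i x) - (y - x) • (∑ i ∈ F, f' i x))
        + (∑' i : {i // i ∉ F}, (f i y - f i x))
        - (y - x) • (∑' i : {i // i ∉ F}, f' i x) := by
    rw [hsplit_y, hsplit_x, hsplit_d, ← hsub]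
    simp only [smul_eq_mul]
    ring
  rw [key]
  have h1 : ‖(y - x) • (∑' i : {i // i ∉ F}, f' i x)‖ ≤ ε / 3 * ‖y - x‖ := by
    rw [norm_smul, mul_comm]
    exact mul_le_mul (tail2.trans hF.le) le_rfl (norm_nonneg _) hδ.le
  have h2 : ‖∑' i : {i // i ∉ F}, (f i y - f i x)‖ ≤ ε / 3 * ‖y - x‖ :=
    tail1.trans (mul_le_mul_of_nonneg_right hF.le (norm_nonneg _))
  calc ‖_ + _ - _‖ ≤ ‖((∑ i ∈ F, f i y) - (∑ i ∈ F, f i x) - (y - x) • (∑ i ∈ F, f' i x))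
        + (∑' i : {i // i ∉ F}, (f i y - f i x))‖
        + ‖(y - x) • (∑' i : {i // i ∉ F}, f' i x)‖ := norm_sub_le _ _
    _ ≤ ‖(∑ i ∈ F, f i y) - (∑ i ∈ F, f i x) - (y - x) • (∑ i ∈ F, f' i x)‖
        + ‖∑' i : {i // i ∉ F}, (f i y - f i x)‖
        + ‖(y - x) • (∑' i : {i // i ∉ F}, f' i x)‖ := by
          gcongr; exact norm_add_le _ _
    _ ≤ ε / 3 * ‖y - x‖ + ε / 3 * ‖y - x‖ + ε / 3 * ‖y - x‖ := by gcongr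
    _ = ε * ‖y - x‖ := by ring

lemma conj_term_aux (t : ℝ) (B : ℤ → ℝ → ℂ) (k j1 j2 : ℤ) :
    (starRingEnd ℂ) ((starRingEnd ℂ) (B k t) *
      (Complex.exp (-Complex.I * (t:ℂ) * (((k - j1) * (j1 - j2) : ℤ):ℂ))
        * B j1 t * (starRingEnd ℂ) (B j2 t) * B (k - j1 + j2) t))
    = (starRingEnd ℂ) (B j1 t) *
      (Complex.exp (-Complex.I * (t:ℂ) * (((j1 - k) * (k - (k - j1 + j2)) : ℤ):ℂ))
        * B k t * (starRingEnd ℂ) (B (k - j1 + j2) t) * B (j1 - k + (k - j1 + j2)) t) := by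
  rw [show (j1 - k + (k - j1 + j2) : ℤ) = j2 by ring]
  rw [show ((j1 - k) * (k - (k - j1 + j2)) : ℤ) = -((k - j1) * (j1 - j2)) by ring]
  simp only [map_mul, ← Complex.exp_conj, map_neg, Complex.conj_I, map_intCast,
    Complex.conj_ofReal, Complex.conj_conj, Int.cast_neg, mul_neg, neg_mul, neg_neg]
  ring

/-- conservation of mass for the Fourier-mode system: if `B_k : [1,T] → ℂ`
are differentiable, uniformly dominated by a summable family `h`, and satisfy
`i B_k'(t) = (1/t) Σ_{(j₁,j₂)} e^{-i t (k-j₁)(j₁-j₂)} B_{j₁}(t) conj(B_{j₂}(t)) B_{k-j₁+j₂}(t)`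
with absolutely convergent sums, then `Σ_k |B_k(t)|²` is constant on `[1,T]`. -/
theorem stmt7 (T : ℝ) (hT : 1 < T) (h : ℤ → ℝ) (hpos : ∀ k : ℤ, 0 ≤ h k)
    (hsum : Summable h) (B D : ℤ → ℝ → ℂ)
    (hbd : ∀ k : ℤ, ∀ t ∈ Set.Icc (1 : ℝ) T, ‖B k t‖ ≤ h k)
    (hderiv : ∀ k : ℤ, ∀ t ∈ Set.Icc (1 : ℝ) T,
      HasDerivWithinAt (B k) (D k t) (Set.Icc (1 : ℝ) T) t)
    (habs : ∀ k : ℤ, ∀ t ∈ Set.Icc (1 : ℝ) T,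
      Summable fun j : ℤ × ℤ =>
        ‖Complex.exp (-Complex.I * (t : ℂ) * (((k - j.1) * (j.1 - j.2) : ℤ) : ℂ))
          * B j.1 t * (starRingEnd ℂ) (B j.2 t) * B (k - j.1 + j.2) t‖)
    (heq : ∀ k : ℤ, ∀ t ∈ Set.Icc (1 : ℝ) T,
      Complex.I * D k t
        = (1 / (t : ℂ)) * ∑' j : ℤ × ℤ,
            Complex.exp (-Complex.I * (t : ℂ) * (((k - j.1) * (j.1 - j.2) : ℤ) : ℂ))
              * B j.1 t * (starRingEnd ℂ) (B j.2 t) * B (k - j.1 + j.2) t) :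
    ∀ t ∈ Set.Icc (1 : ℝ) T,
      ∑' k : ℤ, ‖B k t‖^2 = ∑' k : ℤ, ‖B k 1‖^2 := by
  classical
  have h1mem : (1:ℝ) ∈ Set.Icc (1:ℝ) T := ⟨le_rfl, hT.le⟩
  set C₀ : ℝ := ∑' k, h k with hC₀def
  have hC₀ : 0 ≤ C₀ := tsum_nonneg hpos
  have hhle : ∀ k, h k ≤ C₀ := fun k => Summable.le_tsum hsum k (fun j _ => hpos j)
  have hmul2 : Summable (fun j : ℤ × ℤ => h j.1 * h j.2) := hsum.mul_of_nonneg hsum (fun k => hpos k) (fun k => hpos k)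
  have htsum2 : ∑' j : ℤ × ℤ, h j.1 * h j.2 = C₀ * C₀ :=
    (Summable.tsum_mul_tsum hsum hsum hmul2).symm
  have hS_hasSumBound : HasSum (fun j : ℤ × ℤ => h j.1 * h j.2 * C₀) (C₀ * C₀ * C₀) := by
    have := hmul2.hasSum.mul_right C₀
    rwa [htsum2] at this
  -- norm of term factors
  have hexp : ∀ (x : ℝ) (c : ℤ), ‖Complex.exp (-Complex.I * (x:ℂ) * (c:ℂ))‖ = 1 := by
    intro x c
    rw [Complex.norm_exp]
    norm_num [Complex.mul_re]
  have hbd' : ∀ k : ℤ, ∀ x ∈ Set.Icc (1:ℝ) T, ‖B k x‖ ≤ h k := by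
    intro k x hx; exact hbd k x hx
  have htermle : ∀ (k : ℤ) (x : ℝ), x ∈ Set.Icc (1:ℝ) T → ∀ j : ℤ × ℤ,
      ‖Complex.exp (-Complex.I * (x : ℂ) * (((k - j.1) * (j.1 - j.2) : ℤ) : ℂ))
          * B j.1 x * (starRingEnd ℂ) (B j.2 x) * B (k - j.1 + j.2) x‖
        ≤ h j.1 * h j.2 * C₀ := by
    intro k x hx j
    rw [norm_mul, norm_mul, norm_mul, hexp, one_mul, RCLike.norm_conj]
    have h1 := hbd' j.1 x hx
    have h2 := hbd' j.2 x hx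
    have h3 := (hbd' (k - j.1 + j.2) x hx).trans (hhle _)
    have n1 : (0:ℝ) ≤ ‖B j.1 x‖ := norm_nonneg _
    have n2 : (0:ℝ) ≤ ‖B j.2 x‖ := norm_nonneg _
    have n3 : (0:ℝ) ≤ ‖B (k - j.1 + j.2) x‖ := norm_nonneg _
    exact mul_le_mul (mul_le_mul h1 h2 n2 (hpos j.1)) h3 n3
      (mul_nonneg (hpos j.1) (hpos j.2))
  have hSle : ∀ (k : ℤ) (x : ℝ), x ∈ Set.Icc (1:ℝ) T →
      ‖∑' j : ℤ × ℤ, Complex.exp (-Complex.I * (x : ℂ) * (((k - j.1) * (j.1 - j.2) : ℤ) : ℂ))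
          * B j.1 x * (starRingEnd ℂ) (B j.2 x) * B (k - j.1 + j.2) x‖ ≤ C₀ * C₀ * C₀ :=
    fun k x hx => tsum_of_norm_bounded hS_hasSumBound (htermle k x hx)
  have hDval : ∀ (k : ℤ), ∀ x ∈ Set.Icc (1:ℝ) T,
      D k x = -Complex.I * ((1 / (x : ℂ)) * ∑' j : ℤ × ℤ,
        Complex.exp (-Complex.I * (x : ℂ) * (((k - j.1) * (j.1 - j.2) : ℤ) : ℂ))
          * B j.1 x * (starRingEnd ℂ) (B j.2 x) * B (k - j.1 + j.2) x) := by
    intro k x hx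
    have h0 : -Complex.I * (Complex.I * D k x) = D k x := by
      rw [← mul_assoc, neg_mul, Complex.I_mul_I, neg_neg, one_mul]
    rw [← h0, heq k x hx]
  have hDle : ∀ (k : ℤ), ∀ x ∈ Set.Icc (1:ℝ) T, ‖D k x‖ ≤ C₀ * C₀ * C₀ := by
    intro k x hx
    rw [hDval k x hx, norm_mul, norm_mul]
    have e1 : ‖-Complex.I‖ = 1 := by simp
    have e2 : ‖(1 / (x : ℂ))‖ ≤ 1 := by
      rw [norm_div, norm_one, Complex.norm_real, Real.norm_eq_abs,
        abs_of_nonneg (by linarith [hx.1])]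
      rw [div_le_one (by linarith [hx.1])]
      linarith [hx.1]
    have e3 := hSle k x hx
    have n1 : (0:ℝ) ≤ ‖∑' j : ℤ × ℤ, Complex.exp (-Complex.I * (x : ℂ) *
        (((k - j.1) * (j.1 - j.2) : ℤ) : ℂ)) * B j.1 x * (starRingEnd ℂ) (B j.2 x)
        * B (k - j.1 + j.2) x‖ := norm_nonneg _
    rw [e1, one_mul]
    have := mul_le_mul e2 e3 n1 zero_le_one
    simpa using this
  -- derivative of each |B k|^2
  have hfderiv : ∀ (k : ℤ), ∀ x ∈ Set.Icc (1:ℝ) T,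
      HasDerivWithinAt (fun y => ‖B k y‖^2)
        (2 * ((starRingEnd ℂ) (B k x) * D k x).re) (Set.Icc (1:ℝ) T) x := by
    intro k x hx
    have hB := hderiv k x hx
    have hre : HasDerivWithinAt (fun y => (B k y).re) ((D k x).re) (Set.Icc (1:ℝ) T) x :=
      (Complex.reCLM.hasFDerivAt).comp_hasDerivWithinAt x hB
    have him : HasDerivWithinAt (fun y => (B k y).im) ((D k x).im) (Set.Icc (1:ℝ) T) x :=
      (Complex.imCLM.hasFDerivAt).comp_hasDerivWithinAt x hB
    have hfun : (fun y => ‖B k y‖^2)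
        = fun y => (B k y).re * (B k y).re + (B k y).im * (B k y).im := by
      funext y; rw [Complex.sq_norm, Complex.normSq_apply]
    have h2 : 2 * ((starRingEnd ℂ) (B k x) * D k x).re
        = ((D k x).re * (B k x).re + (B k x).re * (D k x).re)
          + ((D k x).im * (B k x).im + (B k x).im * (D k x).im) := by
      simp [Complex.mul_re, Complex.conj_re, Complex.conj_im]; ring
    rw [hfun, h2]
    exact (hre.mul hre).add (him.mul him)
  have hf'le : ∀ (k : ℤ), ∀ x ∈ Set.Icc (1:ℝ) T,
      ‖2 * ((starRingEnd ℂ) (B k x) * D k x).re‖ ≤ 2 * (C₀ * C₀ * C₀) * h k := by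
    intro k x hx
    have h1 : |((starRingEnd ℂ) (B k x) * D k x).re| ≤ h k * (C₀ * C₀ * C₀) := by
      refine (Complex.abs_re_le_norm _).trans ?_
      rw [norm_mul, RCLike.norm_conj]
      exact mul_le_mul (hbd' k x hx) (hDle k x hx) (norm_nonneg _) (hpos k)
    rw [Real.norm_eq_abs, abs_mul, abs_two]
    nlinarith
  have hu : Summable (fun k : ℤ => 2 * (C₀ * C₀ * C₀) * h k) := hsum.mul_left _
  have hf0 : ∀ x ∈ Set.Icc (1:ℝ) T, Summable (fun k : ℤ => ‖B k x‖^2) := by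
    intro x hx
    refine Summable.of_nonneg_of_le (fun k => sq_nonneg _) (fun k => ?_) (hsum.mul_left C₀)
    have h1 := hbd k x hx
    have h2 := hhle k
    nlinarith [norm_nonneg (B k x), hpos k]
  -- the derivative sum vanishes
  have hzero : ∀ x ∈ Set.Icc (1:ℝ) T,
      (∑' k : ℤ, 2 * ((starRingEnd ℂ) (B k x) * D k x).re) = 0 := by
    intro x hx
    set G : ℤ × ℤ × ℤ → ℂ := fun p => (starRingEnd ℂ) (B p.1 x) *
      (Complex.exp (-Complex.I * (x:ℂ) * (((p.1 - p.2.1) * (p.2.1 - p.2.2) : ℤ):ℂ))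
        * B p.2.1 x * (starRingEnd ℂ) (B p.2.2 x) * B (p.1 - p.2.1 + p.2.2) x) with hGdef
    have hmul3 : Summable (fun p : ℤ × ℤ × ℤ => h p.1 * (h p.2.1 * h p.2.2)) :=
      hsum.mul_of_nonneg hmul2 (fun k => hpos k) (fun j => mul_nonneg (hpos _) (hpos _))
    have hGsum : Summable G := by
      refine Summable.of_norm_bounded (g := fun p => h p.1 * (h p.2.1 * h p.2.2 * C₀)) ?_ ?_
      · exact (hmul3.mul_right C₀).congr (fun p => by ring)
      · intro p
        simp only [hGdef]
        rw [norm_mul, RCLike.norm_conj]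
        exact mul_le_mul (hbd' p.1 x hx) (htermle p.1 x hx p.2) (norm_nonneg _) (hpos _)
    have hGsub : ∀ k : ℤ, Summable (fun j : ℤ × ℤ => G (k, j)) := by
      intro k
      have hs1 : Summable (fun j : ℤ × ℤ =>
          Complex.exp (-Complex.I * (x:ℂ) * (((k - j.1) * (j.1 - j.2) : ℤ):ℂ))
            * B j.1 x * (starRingEnd ℂ) (B j.2 x) * B (k - j.1 + j.2) x) :=
        Summable.of_norm (habs k x hx)
      simpa only [hGdef] using hs1.mul_left ((starRingEnd ℂ) (B k x))
    have hkey : ∀ k : ℤ, (starRingEnd ℂ) (B k x) * D k x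
        = (-Complex.I * (1 / (x:ℂ))) * ∑' j : ℤ × ℤ, G (k, j) := by
      intro k
      have ht : ∑' j : ℤ × ℤ, G (k, j)
          = (starRingEnd ℂ) (B k x) * ∑' j : ℤ × ℤ,
              Complex.exp (-Complex.I * (x:ℂ) * (((k - j.1) * (j.1 - j.2) : ℤ):ℂ))
                * B j.1 x * (starRingEnd ℂ) (B j.2 x) * B (k - j.1 + j.2) x := by
        simp only [hGdef]
        exact tsum_mul_left
      rw [ht, hDval k x hx]
      ring
    have hsumCD : Summable (fun k : ℤ => (starRingEnd ℂ) (B k x) * D k x) := by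
      refine Summable.of_norm_bounded (g := fun k => h k * (C₀ * C₀ * C₀)) (hsum.mul_right _)
        (fun k => ?_)
      rw [norm_mul, RCLike.norm_conj]
      exact mul_le_mul (hbd' k x hx) (hDle k x hx) (norm_nonneg _) (hpos k)
    have hW : ∑' k : ℤ, (starRingEnd ℂ) (B k x) * D k x
        = (-Complex.I * (1 / (x:ℂ))) * ∑' p : ℤ × ℤ × ℤ, G p := by
      calc ∑' k : ℤ, (starRingEnd ℂ) (B k x) * D k x
          = ∑' k : ℤ, ((-Complex.I * (1 / (x:ℂ))) * ∑' j : ℤ × ℤ, G (k, j)) :=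
            tsum_congr hkey
        _ = (-Complex.I * (1 / (x:ℂ))) * ∑' k : ℤ, ∑' j : ℤ × ℤ, G (k, j) := tsum_mul_left
        _ = (-Complex.I * (1 / (x:ℂ))) * ∑' p : ℤ × ℤ × ℤ, G p := by
            rw [← Summable.tsum_prod' hGsum hGsub]
    have hinv : Function.Involutive
        (fun p : ℤ × ℤ × ℤ => (p.2.1, p.1, p.1 - p.2.1 + p.2.2)) := by
      intro p
      obtain ⟨k, j1, j2⟩ := p
      have h3 : j1 - k + (k - j1 + j2) = j2 := by ring
      simp [h3]
    have hWim : (∑' p : ℤ × ℤ × ℤ, G p).im = 0 := by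
      rw [← Complex.conj_eq_iff_im]
      calc (starRingEnd ℂ) (∑' p : ℤ × ℤ × ℤ, G p)
          = ∑' p : ℤ × ℤ × ℤ, (starRingEnd ℂ) (G p) := tsum_star
        _ = ∑' p : ℤ × ℤ × ℤ, G (p.2.1, p.1, p.1 - p.2.1 + p.2.2) := by
            refine tsum_congr (fun p => ?_)
            obtain ⟨k, j1, j2⟩ := p
            simpa only [hGdef] using conj_term_aux x B k j1 j2
        _ = ∑' p : ℤ × ℤ × ℤ, G p := Equiv.tsum_eq (hinv.toPerm _) G
    have h1x : (1 / (x:ℂ)) = ((1/x : ℝ):ℂ) := by push_cast; ring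
    calc ∑' k : ℤ, 2 * ((starRingEnd ℂ) (B k x) * D k x).re
        = 2 * ∑' k : ℤ, ((starRingEnd ℂ) (B k x) * D k x).re := tsum_mul_left
      _ = 2 * (∑' k : ℤ, (starRingEnd ℂ) (B k x) * D k x).re := by
          rw [Complex.re_tsum hsumCD]
      _ = 0 := by
          rw [hW, h1x]
          simp [Complex.mul_re, Complex.mul_im, hWim]
  have hM : ∀ x ∈ Set.Icc (1:ℝ) T,
      HasDerivWithinAt (fun y => ∑' k : ℤ, ‖B k y‖^2) 0 (Set.Icc (1:ℝ) T) x := by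
    intro x hx
    have := tsum_hasDerivWithinAt (f := fun k y => ‖B k y‖^2)
      (f' := fun k y => 2 * ((starRingEnd ℂ) (B k y) * D k y).re)
      (u := fun k => 2 * (C₀ * C₀ * C₀) * h k)
      (convex_Icc 1 T) hu hfderiv hf'le hf0 hx
    rwa [hzero x hx] at this
  intro t ht
  have hle := Convex.norm_image_sub_le_of_norm_hasDerivWithin_le
      (f' := fun _ : ℝ => (0:ℝ)) (C := 0) hM (fun x _ => by simp) (convex_Icc 1 T) h1mem ht
  rw [zero_mul] at hle
  have := norm_le_zero_iff.mp hle
  exact sub_eq_zero.mp this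
end

section
/- For every r with 0 < r < 1/2 there exists a constant C > 0 such that for all integers k, j₁, j₂, j₃ satisfying k − j₁ + j₂ − j₃ = 0 and k² − j₁² + j₂² − j₃² ≠ 0, one has |⟨k⟩^{2r} − ⟨j₁⟩^{2r} + ⟨j₂⟩^{2r} − ⟨j₃⟩^{2r}| / |k² − j₁² + j₂² − j₃²| ≤ C / max{⟨k⟩, ⟨j₁⟩, ⟨j₂⟩, ⟨j₃⟩}. -/
/-- The Japanese bracket `⟨x⟩ = √(1 + x²)`. -/
noncomputable def jbr (x : ℝ) : ℝ := Real.sqrt (1 + x^2)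

noncomputable def Fr (r x : ℝ) : ℝ := (1 + x^2) ^ r

lemma one_add_sq_pos (x : ℝ) : (0:ℝ) < 1 + x^2 := by positivity

lemma jbr_rpow (r x : ℝ) : jbr x ^ (2*r) = Fr r x := by
  rw [jbr, Fr, Real.sqrt_eq_rpow, ← Real.rpow_mul (by positivity)]
  rw [show (1/2*(2*r)) = r by ring]

lemma hasDerivAt_base (x : ℝ) : HasDerivAt (fun x : ℝ => 1 + x^2) (2*x) x := by
  simpa using ((hasDerivAt_pow 2 x).const_add 1)

lemma hasDerivAt_Fr (r x : ℝ) :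
    HasDerivAt (Fr r) (2*r*x*(1 + x^2)^(r-1)) x := by
  have h := (Real.hasDerivAt_rpow_const (p := r) (Or.inl (one_add_sq_pos x).ne')).comp
    x (hasDerivAt_base x)
  exact h.congr_deriv (by ring)

lemma hasDerivAt_Fr' (r x : ℝ) :
    HasDerivAt (fun x => 2*r*x*(1 + x^2)^(r-1))
      (2*r*(1 + x^2)^(r-1) + 4*r*(r-1)*x^2*(1 + x^2)^(r-2)) x := by
  have h1 : HasDerivAt (fun x : ℝ => (1 + x^2)^(r-1)) ((r-1)*(1 + x^2)^(r-2)*(2*x)) x := by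
    have h := (Real.hasDerivAt_rpow_const (p := r-1) (Or.inl (one_add_sq_pos x).ne')).comp
      x (hasDerivAt_base x)
    exact h.congr_deriv (by ring)
  have h2 : HasDerivAt (fun x : ℝ => 2*r*x) (2*r) x := by
    simpa using (hasDerivAt_id x).const_mul (2*r)
  have := h2.mul h1
  exact this.congr_deriv (by ring)

lemma abs_Fr'_le (r x : ℝ) (hr0 : 0 < r) (hr : r < 1/2) :
    |2*r*x*(1 + x^2)^(r-1)| ≤ 1 := by
  have hb : (0:ℝ) < 1 + x^2 := one_add_sq_pos x
  have h1 : |2*r*x*(1 + x^2)^(r-1)| = 2*r*|x| *(1 + x^2)^(r-1) := by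
    rw [abs_mul, abs_mul, abs_of_nonneg (by positivity : (0:ℝ) ≤ 2*r),
      abs_of_nonneg (Real.rpow_nonneg hb.le _)]
  rw [h1]
  have hx : |x| ≤ (1 + x^2) ^ ((1:ℝ)/2) := by
    rw [← Real.sqrt_eq_rpow]
    calc |x| = Real.sqrt (x^2) := (Real.sqrt_sq_eq_abs x).symm
    _ ≤ Real.sqrt (1 + x^2) := Real.sqrt_le_sqrt (by linarith)
  calc 2*r*|x| *(1 + x^2)^(r-1) ≤ 2*r*((1 + x^2)^((1:ℝ)/2))*(1 + x^2)^(r-1) := by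
        gcongr
  _ = 2*r*(1 + x^2)^((1:ℝ)/2 + (r-1)) := by
        rw [mul_assoc, ← Real.rpow_add hb]
  _ ≤ 2*r*1 := by
        gcongr 2*r*?_
        exact Real.rpow_le_one_of_one_le_of_nonpos (by nlinarith [sq_nonneg x]) (by linarith)
  _ ≤ 1 := by linarith

lemma abs_Fr''_le (r x : ℝ) (hr0 : 0 < r) (hr : r < 1/2) (hx : 1/2 ≤ x) :
    |2*r*(1 + x^2)^(r-1) + 4*r*(r-1)*x^2*(1 + x^2)^(r-2)| ≤ 6 / x := by
  have hb : (0:ℝ) < 1 + x^2 := one_add_sq_pos x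
  have hx0 : (0:ℝ) < x := by linarith
  have e1 : (0:ℝ) ≤ (1 + x^2)^(r-1) := Real.rpow_nonneg hb.le _
  have e2 : (0:ℝ) ≤ (1 + x^2)^(r-2) := Real.rpow_nonneg hb.le _
  have t1 : |2*r*(1 + x^2)^(r-1) + 4*r*(r-1)*x^2*(1 + x^2)^(r-2)|
      ≤ 2*r*(1 + x^2)^(r-1) + 4*r*(1-r)*x^2*(1 + x^2)^(r-2) := by
    have a1 : |2*r*(1 + x^2)^(r-1)| = 2*r*(1 + x^2)^(r-1) := by
      rw [abs_of_nonneg]; positivity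
    have a2 : |4*r*(r-1)*x^2*(1 + x^2)^(r-2)| = 4*r*(1-r)*x^2*(1 + x^2)^(r-2) := by
      rw [abs_mul, abs_of_nonneg e2, abs_mul, abs_of_nonneg (by positivity : (0:ℝ) ≤ x^2),
        abs_mul, abs_of_nonneg (by positivity : (0:ℝ) ≤ (4:ℝ)*r), abs_of_neg (by linarith : r-1 < 0)]
      ring
    calc |2*r*(1 + x^2)^(r-1) + 4*r*(r-1)*x^2*(1 + x^2)^(r-2)|
        ≤ |2*r*(1 + x^2)^(r-1)| + |4*r*(r-1)*x^2*(1 + x^2)^(r-2)| := abs_add_le _ _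
    _ = 2*r*(1 + x^2)^(r-1) + 4*r*(1-r)*x^2*(1 + x^2)^(r-2) := by rw [a1, a2]
  have t2 : x^2*(1 + x^2)^(r-2) ≤ (1 + x^2)^(r-1) := by
    calc x^2*(1 + x^2)^(r-2) ≤ (1 + x^2)*(1 + x^2)^(r-2) := by gcongr; linarith
    _ = (1 + x^2)^((1:ℝ) + (r-2)) := by
        rw [Real.rpow_add hb, Real.rpow_one]
    _ = (1 + x^2)^(r-1) := by rw [show (1:ℝ) + (r-2) = r-1 by ring]
  have t3 : 2*r*(1 + x^2)^(r-1) + 4*r*(1-r)*x^2*(1 + x^2)^(r-2) ≤ 2*(1 + x^2)^(r-1) := by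
    have h4 : 4*r*(1-r)*(x^2*(1 + x^2)^(r-2)) ≤ 4*r*(1-r)*(1 + x^2)^(r-1) := by
      have : (0:ℝ) ≤ 4*r*(1-r) := by nlinarith
      exact mul_le_mul_of_nonneg_left t2 this
    have hc : (0:ℝ) ≤ (2*(2*r-1)*(r-1)) * (1 + x^2)^(r-1) :=
      mul_nonneg (by nlinarith) e1
    nlinarith [h4, hc]
  have t4 : (1 + x^2)^(r-1) ≤ 3 / x := by
    have s1 : (1 + x^2)^(r-1) ≤ (x^2)^(r-1) :=
      Real.rpow_le_rpow_of_nonpos (by positivity) (by linarith) (by linarith)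
    have s2 : (x^2:ℝ)^(r-1) = x ^ (2*r-2) := by
      rw [← Real.rpow_natCast x 2, ← Real.rpow_mul hx0.le]
      norm_num
      ring_nf
    have s3 : x ^ (2*r-2) = x ^ (2*r-1) * x⁻¹ := by
      rw [← Real.rpow_neg_one x, ← Real.rpow_add hx0]
      ring_nf
    have s4 : x ^ (2*r-1) ≤ ((1:ℝ)/2) ^ (2*r-1) :=
      Real.rpow_le_rpow_of_nonpos (by norm_num) hx (by linarith)
    have s5 : ((1:ℝ)/2) ^ (2*r-1) ≤ 2 := by
      have q1 : ((1:ℝ)/2)^(2*r-1) = ((1:ℝ)/2)^(2*r) * ((1:ℝ)/2)^(-(1:ℝ)) := by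
        rw [← Real.rpow_add (by norm_num)]; ring_nf
      have q2 : ((1:ℝ)/2)^(2*r) ≤ 1 := Real.rpow_le_one (by norm_num) (by norm_num) (by linarith)
      have q3 : ((1:ℝ)/2)^(-(1:ℝ)) = 2 := by
        rw [Real.rpow_neg_one]; norm_num
      rw [q1, q3]
      nlinarith [Real.rpow_nonneg (by norm_num : (0:ℝ) ≤ 1/2) (2*r)]
    have s6 : (0:ℝ) ≤ x⁻¹ := by positivity
    calc (1 + x^2)^(r-1) ≤ x ^ (2*r-1) * x⁻¹ := by rw [← s3, ← s2]; exact s1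
    _ ≤ 2 * x⁻¹ := mul_le_mul_of_nonneg_right (le_trans s4 s5) s6
    _ = 2 / x := by rw [div_eq_mul_inv]
    _ ≤ 3 / x := by gcongr <;> norm_num
  calc |2*r*(1 + x^2)^(r-1) + 4*r*(r-1)*x^2*(1 + x^2)^(r-2)|
      ≤ 2*r*(1 + x^2)^(r-1) + 4*r*(1-r)*x^2*(1 + x^2)^(r-2) := t1
  _ ≤ 2*(1 + x^2)^(r-1) := t3
  _ ≤ 2*(3/x) := by linarith [t4]
  _ = 6 / x := by ring

lemma Fr_lip (r : ℝ) (hr0 : 0 < r) (hr : r < 1/2) (x y : ℝ) :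
    |Fr r x - Fr r y| ≤ |x - y| := by
  have h := Convex.norm_image_sub_le_of_norm_hasDerivWithin_le
    (f := Fr r) (f' := fun z => 2*r*z*(1+z^2)^(r-1)) (s := Set.univ) (C := 1)
    (fun z _ => (hasDerivAt_Fr r z).hasDerivWithinAt)
    (fun z _ => by rw [Real.norm_eq_abs]; exact abs_Fr'_le r z hr0 hr)
    convex_univ (Set.mem_univ y) (Set.mem_univ x)
  simpa [Real.norm_eq_abs] using h

lemma second_diff (r : ℝ) (hr0 : 0 < r) (hr : r < 1/2) (k a b : ℝ)
    (hk : 1 ≤ k) (ha : |a| ≤ k/4) (hb : |b| ≤ k/4) :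
    |Fr r k - Fr r (k-a) + Fr r (k-a-b) - Fr r (k-b)| ≤ 12/k * (|a| * |b|) := by
  have hk0 : (0:ℝ) < k := by linarith
  have ha1 : -(k/4) ≤ a := neg_le_of_abs_le ha
  have ha2 : a ≤ k/4 := le_of_abs_le ha
  have hb1 : -(k/4) ≤ b := neg_le_of_abs_le hb
  have hb2 : b ≤ k/4 := le_of_abs_le hb
  set s₂ : Set ℝ := Set.Icc (k/2) (3*k/2) with hs₂
  -- bound on F'' over s₂
  have hF'' : ∀ u ∈ s₂, ‖2*r*(1 + u^2)^(r-1) + 4*r*(r-1)*u^2*(1 + u^2)^(r-2)‖ ≤ 12/k := by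
    intro u hu
    obtain ⟨hu1, hu2⟩ := hu
    have hu0 : 1/2 ≤ u := by linarith
    have := abs_Fr''_le r u hr0 hr hu0
    have h6 : 6/u ≤ 12/k := by
      rw [div_le_div_iff₀ (by linarith) hk0]
      nlinarith
    rw [Real.norm_eq_abs]
    linarith
  -- inner MVT: bound on g' over s₁
  have hg' : ∀ t ∈ Set.Icc (k - k/4) (k + k/4),
      |(2*r*t*(1+t^2)^(r-1)) - (2*r*(t-b)*(1+(t-b)^2)^(r-1))| ≤ 12/k * |b| := by
    intro t ht
    obtain ⟨ht1, ht2⟩ := ht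
    have hmem1 : t ∈ s₂ := ⟨by linarith, by linarith⟩
    have hmem2 : t - b ∈ s₂ := ⟨by linarith, by linarith⟩
    have h := Convex.norm_image_sub_le_of_norm_hasDerivWithin_le
      (f := fun z => 2*r*z*(1+z^2)^(r-1))
      (f' := fun z => 2*r*(1 + z^2)^(r-1) + 4*r*(r-1)*z^2*(1 + z^2)^(r-2))
      (s := s₂) (C := 12/k)
      (fun z _ => (hasDerivAt_Fr' r z).hasDerivWithinAt)
      hF'' (convex_Icc _ _) hmem2 hmem1
    have he : t - (t - b) = b := by ring
    rw [Real.norm_eq_abs, Real.norm_eq_abs, he] at h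
    linarith
  -- outer MVT on g
  have hgd : ∀ t ∈ Set.Icc (k - k/4) (k + k/4),
      HasDerivWithinAt (fun z => Fr r z - Fr r (z - b))
        ((2*r*t*(1+t^2)^(r-1)) - (2*r*(t-b)*(1+(t-b)^2)^(r-1)))
        (Set.Icc (k - k/4) (k + k/4)) t := by
    intro t _
    have h1 : HasDerivAt (fun z : ℝ => Fr r (z - b))
        (2*r*(t-b)*(1+(t-b)^2)^(r-1)) t := by
      have := (hasDerivAt_Fr r (t - b)).comp t ((hasDerivAt_id t).sub_const b)
      exact this.congr_deriv (by ring)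
    exact ((hasDerivAt_Fr r t).sub h1).hasDerivWithinAt
  have hmain := Convex.norm_image_sub_le_of_norm_hasDerivWithin_le
    hgd hg' (convex_Icc _ _)
    (Set.mem_Icc.mpr ⟨by linarith, by linarith⟩ : k - a ∈ Set.Icc (k - k/4) (k + k/4))
    (Set.mem_Icc.mpr ⟨by linarith, by linarith⟩ : k ∈ Set.Icc (k - k/4) (k + k/4))
  rw [Real.norm_eq_abs, Real.norm_eq_abs] at hmain
  have he1 : Fr r k - Fr r (k - b) - (Fr r (k-a) - Fr r (k - a - b))
      = Fr r k - Fr r (k-a) + Fr r (k-a-b) - Fr r (k-b) := by ring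
  have he2 : k - (k - a) = a := by ring
  rw [he1, he2] at hmain
  calc |Fr r k - Fr r (k-a) + Fr r (k-a-b) - Fr r (k-b)| ≤ 12/k*|b| * |a| := hmain
  _ = 12/k * (|a| * |b|) := by ring

lemma jbr_pos (x : ℝ) : 0 < jbr x := Real.sqrt_pos.mpr (one_add_sq_pos x)

lemma jbr_even (x : ℝ) : jbr (-x) = jbr x := by simp [jbr]

lemma jbr_mono {x y : ℝ} (h : |x| ≤ |y|) : jbr x ≤ jbr y := by
  apply Real.sqrt_le_sqrt
  have := sq_abs x; have := sq_abs y
  nlinarith [abs_nonneg x, abs_nonneg y]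

lemma jbr_le_two_mul {k : ℝ} (hk : 1 ≤ k) : jbr k ≤ 2*k := by
  rw [jbr, show (2*k) = Real.sqrt ((2*k)^2) from (Real.sqrt_sq (by linarith)).symm]
  apply Real.sqrt_le_sqrt
  nlinarith

lemma main_lem (r : ℝ) (hr0 : 0 < r) (hr : r < 1/2) (k j₁ j₂ j₃ : ℤ)
    (h1 : |j₁| ≤ k) (h2 : |j₂| ≤ k) (h3 : |j₃| ≤ k)
    (hsum : k - j₁ + j₂ - j₃ = 0) (hD : k^2 - j₁^2 + j₂^2 - j₃^2 ≠ 0) :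
    |Fr r k - Fr r j₁ + Fr r j₂ - Fr r j₃|
      ≤ 16 / jbr k * |(k:ℝ)^2 - (j₁:ℝ)^2 + (j₂:ℝ)^2 - (j₃:ℝ)^2| := by
  set a : ℤ := k - j₁ with ha_def
  set b : ℤ := j₁ - j₂ with hb_def
  have hDZ : k^2 - j₁^2 + j₂^2 - j₃^2 = 2*a*b := by
    rw [ha_def, hb_def]; linear_combination (k - j₁ + j₂ + j₃) * hsum
  have hab : 2*a*b ≠ 0 := hDZ ▸ hD
  have ha0 : a ≠ 0 := by intro h; rw [h] at hab; simp at hab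
  have hb0 : b ≠ 0 := by intro h; rw [h] at hab; simp at hab
  obtain ⟨l1, u1⟩ := abs_le.mp h1
  obtain ⟨l2, u2⟩ := abs_le.mp h2
  obtain ⟨l3, u3⟩ := abs_le.mp h3
  have hk1 : 1 ≤ k := by omega
  -- real versions
  have hk1r : (1:ℝ) ≤ (k:ℝ) := by exact_mod_cast hk1
  have hkr0 : (0:ℝ) < (k:ℝ) := by linarith
  have hjbr2k : jbr k ≤ 2*(k:ℝ) := jbr_le_two_mul hk1r
  have hjbrpos : 0 < jbr (k:ℝ) := jbr_pos _
  have hsumr : (k:ℝ) - j₁ + j₂ - j₃ = 0 := by exact_mod_cast hsum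
  have hDr : (k:ℝ)^2 - (j₁:ℝ)^2 + (j₂:ℝ)^2 - (j₃:ℝ)^2 = 2*(a:ℝ)*(b:ℝ) := by
    exact_mod_cast congrArg (Int.cast : ℤ → ℝ) hDZ
  have habs2 : |(2:ℝ)*(a:ℝ)*(b:ℝ)| = 2*|(a:ℝ)| * |(b:ℝ)| := by
    rw [abs_mul, abs_mul]; norm_num
  have han : (0:ℝ) ≤ |(a:ℝ)| := abs_nonneg _
  have hbn : (0:ℝ) ≤ |(b:ℝ)| := abs_nonneg _
  have ha1r : (1:ℝ) ≤ |(a:ℝ)| := by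
    have : 1 ≤ |a| := by have := abs_pos.mpr ha0; omega
    calc (1:ℝ) ≤ ((|a| : ℤ) : ℝ) := by exact_mod_cast this
    _ = |(a:ℝ)| := by push_cast; ring
  have hb1r : (1:ℝ) ≤ |(b:ℝ)| := by
    have : 1 ≤ |b| := by have := abs_pos.mpr hb0; omega
    calc (1:ℝ) ≤ ((|b| : ℤ) : ℝ) := by exact_mod_cast this
    _ = |(b:ℝ)| := by push_cast; ring
  rw [hDr, habs2]
  rcases le_or_gt (k:ℝ) (4*|(a:ℝ)|) with hA | hA
  · -- case |a| large : pair (k, j₃) and (j₂, j₁)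
    have e1 : (k:ℝ) - (j₃:ℝ) = (b:ℝ) := by push_cast [hb_def]; linarith
    have e2 : (j₂:ℝ) - (j₁:ℝ) = -(b:ℝ) := by push_cast [hb_def]; linarith
    have lip1 := Fr_lip r hr0 hr (k:ℝ) (j₃:ℝ)
    have lip2 := Fr_lip r hr0 hr (j₂:ℝ) (j₁:ℝ)
    rw [e1] at lip1
    rw [e2, abs_neg] at lip2
    have hN : |Fr r k - Fr r j₁ + Fr r j₂ - Fr r j₃| ≤ 2*|(b:ℝ)| := by
      calc |Fr r k - Fr r j₁ + Fr r j₂ - Fr r j₃|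
          = |(Fr r k - Fr r j₃) + (Fr r j₂ - Fr r j₁)| := by ring_nf
      _ ≤ |Fr r k - Fr r j₃| + |Fr r j₂ - Fr r j₁| := abs_add_le _ _
      _ ≤ 2*|(b:ℝ)| := by linarith
    rw [div_mul_eq_mul_div, le_div_iff₀ hjbrpos]
    calc |Fr r ↑k - Fr r ↑j₁ + Fr r ↑j₂ - Fr r ↑j₃| * jbr ↑k
          ≤ (2*|(b:ℝ)|) * (2*(k:ℝ)) := by
            apply mul_le_mul hN hjbr2k hjbrpos.le (by positivity)
    _ ≤ 16 * (2 * |(a:ℝ)| * |(b:ℝ)|) := by nlinarith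
  rcases le_or_gt (k:ℝ) (4*|(b:ℝ)|) with hB | hB
  · -- case |b| large : pair (k, j₁) and (j₂, j₃)
    have e1 : (k:ℝ) - (j₁:ℝ) = (a:ℝ) := by push_cast [ha_def]; ring
    have e2 : (j₂:ℝ) - (j₃:ℝ) = -(a:ℝ) := by push_cast [ha_def]; linarith
    have lip1 := Fr_lip r hr0 hr (k:ℝ) (j₁:ℝ)
    have lip2 := Fr_lip r hr0 hr (j₂:ℝ) (j₃:ℝ)
    rw [e1] at lip1
    rw [e2, abs_neg] at lip2
    have hN : |Fr r k - Fr r j₁ + Fr r j₂ - Fr r j₃| ≤ 2*|(a:ℝ)| := by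
      calc |Fr r k - Fr r j₁ + Fr r j₂ - Fr r j₃|
          = |(Fr r k - Fr r j₁) + (Fr r j₂ - Fr r j₃)| := by ring_nf
      _ ≤ |Fr r k - Fr r j₁| + |Fr r j₂ - Fr r j₃| := abs_add_le _ _
      _ ≤ 2*|(a:ℝ)| := by linarith
    rw [div_mul_eq_mul_div, le_div_iff₀ hjbrpos]
    calc |Fr r ↑k - Fr r ↑j₁ + Fr r ↑j₂ - Fr r ↑j₃| * jbr ↑k
        ≤ (2*|(a:ℝ)|) * (2*(k:ℝ)) := by
          apply mul_le_mul hN hjbr2k hjbrpos.le (by positivity)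
    _ ≤ 16 * (2 * |(a:ℝ)| * |(b:ℝ)|) := by nlinarith
  · -- case both small : second difference
    have har : |(a:ℝ)| ≤ (k:ℝ)/4 := by linarith
    have hbr : |(b:ℝ)| ≤ (k:ℝ)/4 := by linarith
    have sd := second_diff r hr0 hr (k:ℝ) (a:ℝ) (b:ℝ) hk1r har hbr
    have e1 : (k:ℝ) - (a:ℝ) = (j₁:ℝ) := by push_cast [ha_def]; ring
    have e2 : (k:ℝ) - (a:ℝ) - (b:ℝ) = (j₂:ℝ) := by push_cast [ha_def, hb_def]; ring
    have e3 : (k:ℝ) - (b:ℝ) = (j₃:ℝ) := by push_cast [hb_def]; linarith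
    rw [e2, e1, e3] at sd
    rw [div_mul_eq_mul_div, le_div_iff₀ hjbrpos]
    calc |Fr r ↑k - Fr r ↑j₁ + Fr r ↑j₂ - Fr r ↑j₃| * jbr ↑k
        ≤ (12/(k:ℝ) * (|(a:ℝ)| * |(b:ℝ)|)) * (2*(k:ℝ)) := by
          apply mul_le_mul sd hjbr2k hjbrpos.le (by positivity)
    _ = 24 * (|(a:ℝ)| * |(b:ℝ)|) := by field_simp; ring
    _ ≤ 16 * (2 * |(a:ℝ)| * |(b:ℝ)|) := by nlinarith

lemma Fr_even (r x : ℝ) : Fr r (-x) = Fr r x := by simp [Fr]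

lemma main_abs (r : ℝ) (hr0 : 0 < r) (hr : r < 1/2) (k j₁ j₂ j₃ : ℤ)
    (h1 : |j₁| ≤ |k|) (h2 : |j₂| ≤ |k|) (h3 : |j₃| ≤ |k|)
    (hsum : k - j₁ + j₂ - j₃ = 0) (hD : k^2 - j₁^2 + j₂^2 - j₃^2 ≠ 0) :
    |Fr r k - Fr r j₁ + Fr r j₂ - Fr r j₃|
      ≤ 16 / jbr k * |(k:ℝ)^2 - (j₁:ℝ)^2 + (j₂:ℝ)^2 - (j₃:ℝ)^2| := by
  rcases le_or_gt 0 k with hk | hk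
  · rw [abs_of_nonneg hk] at h1 h2 h3
    exact main_lem r hr0 hr k j₁ j₂ j₃ h1 h2 h3 hsum hD
  · have hk' : |k| = -k := abs_of_neg hk
    rw [hk'] at h1 h2 h3
    have h1' : |(-j₁)| ≤ -k := by rwa [abs_neg]
    have h2' : |(-j₂)| ≤ -k := by rwa [abs_neg]
    have h3' : |(-j₃)| ≤ -k := by rwa [abs_neg]
    have hsum' : -k - (-j₁) + (-j₂) - (-j₃) = 0 := by omega
    have hD' : (-k)^2 - (-j₁)^2 + (-j₂)^2 - (-j₃)^2 ≠ 0 := by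
      have e : (-k)^2 - (-j₁)^2 + (-j₂)^2 - (-j₃)^2 = k^2 - j₁^2 + j₂^2 - j₃^2 := by ring
      rw [e]; exact hD
    have h := main_lem r hr0 hr (-k) (-j₁) (-j₂) (-j₃) h1' h2' h3' hsum' hD'
    push_cast at h
    rw [Fr_even, Fr_even, Fr_even, Fr_even, jbr_even] at h
    have e2 : |(-(k:ℝ))^2 - (-(j₁:ℝ))^2 + (-(j₂:ℝ))^2 - (-(j₃:ℝ))^2|
        = |(k:ℝ)^2 - (j₁:ℝ)^2 + (j₂:ℝ)^2 - (j₃:ℝ)^2| := by ring_nf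
    rw [e2] at h
    exact h

lemma jbr_mono_int {x y : ℤ} (h : |x| ≤ |y|) : jbr x ≤ jbr y := by
  apply jbr_mono
  have : ((|x| : ℤ) : ℝ) ≤ ((|y| : ℤ) : ℝ) := by exact_mod_cast h
  push_cast at this
  exact this

lemma wrap {N D M C : ℝ} (hM : 0 < M) (hD : 0 < D) (h : N ≤ C / M * D) : N / D ≤ C / M := by
  rw [div_le_div_iff₀ hD hM]
  calc N * M ≤ (C / M * D) * M := mul_le_mul_of_nonneg_right h hM.le
  _ = C * D * (M / M) := by ring
  _ = C * D := by rw [div_self hM.ne', mul_one]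

/-- for `0 < r < 1/2` there is `C > 0` such that for every nonresonant
quadruple (`k - j₁ + j₂ - j₃ = 0`, `k² - j₁² + j₂² - j₃² ≠ 0`),
`|⟨k⟩^{2r} - ⟨j₁⟩^{2r} + ⟨j₂⟩^{2r} - ⟨j₃⟩^{2r}| / |k² - j₁² + j₂² - j₃²|
  ≤ C / max{⟨k⟩, ⟨j₁⟩, ⟨j₂⟩, ⟨j₃⟩}`. -/
theorem stmt8 (r : ℝ) (hr0 : 0 < r) (hr : r < 1/2) :
    ∃ C : ℝ, 0 < C ∧ ∀ k j₁ j₂ j₃ : ℤ,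
      k - j₁ + j₂ - j₃ = 0 → k^2 - j₁^2 + j₂^2 - j₃^2 ≠ 0 →
      |jbr k ^ (2*r) - jbr j₁ ^ (2*r) + jbr j₂ ^ (2*r) - jbr j₃ ^ (2*r)|
          / |(k : ℝ)^2 - (j₁ : ℝ)^2 + (j₂ : ℝ)^2 - (j₃ : ℝ)^2|
        ≤ C / max (max (jbr k) (jbr j₁)) (max (jbr j₂) (jbr j₃)) := by

  refine ⟨16, by norm_num, ?_⟩
  intro k j₁ j₂ j₃ hsum hD
  have hDr0 : (k:ℝ)^2 - (j₁:ℝ)^2 + (j₂:ℝ)^2 - (j₃:ℝ)^2 ≠ 0 := by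
    exact_mod_cast hD
  have hDabs : 0 < |(k:ℝ)^2 - (j₁:ℝ)^2 + (j₂:ℝ)^2 - (j₃:ℝ)^2| := abs_pos.mpr hDr0
  rw [jbr_rpow, jbr_rpow, jbr_rpow, jbr_rpow]
  have H : (|j₁| ≤ |k| ∧ |j₂| ≤ |k| ∧ |j₃| ≤ |k|)
      ∨ (|k| ≤ |j₁| ∧ |j₂| ≤ |j₁| ∧ |j₃| ≤ |j₁|)
      ∨ (|k| ≤ |j₂| ∧ |j₁| ≤ |j₂| ∧ |j₃| ≤ |j₂|)
      ∨ (|k| ≤ |j₃| ∧ |j₁| ≤ |j₃| ∧ |j₂| ≤ |j₃|) := by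
    simp only [Int.abs_eq_natAbs]
    omega
  rcases H with ⟨c1, c2, c3⟩ | ⟨c1, c2, c3⟩ | ⟨c1, c2, c3⟩ | ⟨c1, c2, c3⟩
  · have bound := main_abs r hr0 hr k j₁ j₂ j₃ c1 c2 c3 hsum hD
    have hM : max (max (jbr k) (jbr j₁)) (max (jbr j₂) (jbr j₃)) = jbr (k:ℝ) := by
      rw [max_eq_left (jbr_mono_int c1),
        max_eq_left (max_le (jbr_mono_int c2) (jbr_mono_int c3))]
    rw [hM]
    exact wrap (jbr_pos _) hDabs bound
  · have hsum' : j₁ - k + j₃ - j₂ = 0 := by omega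
    have hD' : j₁^2 - k^2 + j₃^2 - j₂^2 ≠ 0 := by
      rw [show j₁^2 - k^2 + j₃^2 - j₂^2 = -(k^2 - j₁^2 + j₂^2 - j₃^2) from by ring]
      exact neg_ne_zero.mpr hD
    have bound := main_abs r hr0 hr j₁ k j₃ j₂ c1 c3 c2 hsum' hD'
    have eN : Fr r j₁ - Fr r k + Fr r j₃ - Fr r j₂
        = -(Fr r k - Fr r j₁ + Fr r j₂ - Fr r j₃) := by ring
    have eD : (j₁:ℝ)^2 - (k:ℝ)^2 + (j₃:ℝ)^2 - (j₂:ℝ)^2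
        = -((k:ℝ)^2 - (j₁:ℝ)^2 + (j₂:ℝ)^2 - (j₃:ℝ)^2) := by ring
    rw [eN, eD, abs_neg, abs_neg] at bound
    have hM : max (max (jbr k) (jbr j₁)) (max (jbr j₂) (jbr j₃)) = jbr (j₁:ℝ) := by
      rw [max_eq_right (jbr_mono_int c1),
        max_eq_left (max_le (jbr_mono_int c2) (jbr_mono_int c3))]
    rw [hM]
    exact wrap (jbr_pos _) hDabs bound
  · have hsum' : j₂ - j₁ + k - j₃ = 0 := by omega
    have hD' : j₂^2 - j₁^2 + k^2 - j₃^2 ≠ 0 := by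
      rw [show j₂^2 - j₁^2 + k^2 - j₃^2 = k^2 - j₁^2 + j₂^2 - j₃^2 from by ring]
      exact hD
    have bound := main_abs r hr0 hr j₂ j₁ k j₃ c2 c1 c3 hsum' hD'
    have eN : Fr r j₂ - Fr r j₁ + Fr r k - Fr r j₃
        = Fr r k - Fr r j₁ + Fr r j₂ - Fr r j₃ := by ring
    have eD : (j₂:ℝ)^2 - (j₁:ℝ)^2 + (k:ℝ)^2 - (j₃:ℝ)^2
        = (k:ℝ)^2 - (j₁:ℝ)^2 + (j₂:ℝ)^2 - (j₃:ℝ)^2 := by ring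
    rw [eN, eD] at bound
    have hM : max (max (jbr k) (jbr j₁)) (max (jbr j₂) (jbr j₃)) = jbr (j₂:ℝ) := by
      rw [max_eq_left (jbr_mono_int c3),
        max_eq_right (max_le (jbr_mono_int c1) (jbr_mono_int c2))]
    rw [hM]
    exact wrap (jbr_pos _) hDabs bound
  · have hsum' : j₃ - k + j₁ - j₂ = 0 := by omega
    have hD' : j₃^2 - k^2 + j₁^2 - j₂^2 ≠ 0 := by
      rw [show j₃^2 - k^2 + j₁^2 - j₂^2 = -(k^2 - j₁^2 + j₂^2 - j₃^2) from by ring]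
      exact neg_ne_zero.mpr hD
    have bound := main_abs r hr0 hr j₃ k j₁ j₂ c1 c2 c3 hsum' hD'
    have eN : Fr r j₃ - Fr r k + Fr r j₁ - Fr r j₂
        = -(Fr r k - Fr r j₁ + Fr r j₂ - Fr r j₃) := by ring
    have eD : (j₃:ℝ)^2 - (k:ℝ)^2 + (j₁:ℝ)^2 - (j₂:ℝ)^2
        = -((k:ℝ)^2 - (j₁:ℝ)^2 + (j₂:ℝ)^2 - (j₃:ℝ)^2) := by ring
    rw [eN, eD, abs_neg, abs_neg] at bound
    have hM : max (max (jbr k) (jbr j₁)) (max (jbr j₂) (jbr j₃)) = jbr (j₃:ℝ) := by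
      rw [max_eq_right (jbr_mono_int c3),
        max_eq_right (max_le (jbr_mono_int c1) (jbr_mono_int c2))]
    rw [hM]
    exact wrap (jbr_pos _) hDabs bound
end

section
/- Double difference bound: for every r with 0 < r < 1/2 there exists a constant C > 0 such that for all real numbers a, b, c, d ≥ 0 with a − b + c − d = 0, one has |⟨a⟩^{2r} − ⟨b⟩^{2r} + ⟨c⟩^{2r} − ⟨d⟩^{2r}| ≤ C · |a − b| · |b − c| · ⟨min{a, b, c, d}⟩^{2r − 2}. -/
/-- Auxiliary: `F(x) = (1+x²)^r`. -/
noncomputable def stmtF (r : ℝ) : ℝ → ℝ := fun y => (1+y^2)^r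

/-- Auxiliary: first derivative of `stmtF`. -/
noncomputable def stmtFd (r : ℝ) : ℝ → ℝ := fun y => (2*y)*r*(1+y^2)^(r-1)

/-- Auxiliary: second derivative of `stmtF`. -/
noncomputable def stmtFdd (r : ℝ) : ℝ → ℝ :=
  fun y => 2*r*(1+y^2)^(r-1) + (2*y*r)*((2*y)*(r-1)*(1+y^2)^(r-2))

lemma stmt11_jbr1 (r x : ℝ) : jbr x ^ (2*r) = stmtF r x := by
  have h : (0:ℝ) ≤ 1 + x^2 := by positivity
  rw [jbr, stmtF, Real.sqrt_eq_rpow, ← Real.rpow_mul h]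
  ring_nf

lemma stmt11_jbr2 (r x : ℝ) : jbr x ^ (2*r-2) = (1+x^2)^(r-1) := by
  have h : (0:ℝ) ≤ 1 + x^2 := by positivity
  rw [jbr, Real.sqrt_eq_rpow, ← Real.rpow_mul h]
  ring_nf

lemma stmt11_hF (r x : ℝ) : HasDerivAt (stmtF r) (stmtFd r x) x := by
  have h1 : HasDerivAt (fun y : ℝ => 1+y^2) (2*x) x := by
    simpa using ((hasDerivAt_pow 2 x).const_add 1)
  exact h1.rpow_const (Or.inl (by positivity))

lemma stmt11_hFd (r x : ℝ) : HasDerivAt (stmtFd r) (stmtFdd r x) x := by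
  have h1 : HasDerivAt (fun y : ℝ => 1+y^2) (2*x) x := by
    simpa using ((hasDerivAt_pow 2 x).const_add 1)
  have hv : HasDerivAt (fun y : ℝ => (1+y^2)^(r-1)) ((2*x)*(r-1)*(1+x^2)^(r-1-1)) x :=
    h1.rpow_const (Or.inl (by positivity))
  have hu : HasDerivAt (fun y : ℝ => (2*y)*r) (2*r) x := by
    simpa using (((hasDerivAt_id x).const_mul 2).mul_const r)
  have := hu.mul hv
  refine this.congr_deriv ?_
  unfold stmtFdd
  ring_nf

lemma stmt11_bound (r : ℝ) (hr0 : 0 < r) (hr : r < 1/2) (x : ℝ) :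
    |stmtFdd r x| ≤ 6*r*(1+x^2)^(r-1) := by
  have hp : (0:ℝ) < 1 + x^2 := by positivity
  have P2 : (0:ℝ) < (1+x^2)^(r-2) := Real.rpow_pos_of_pos hp _
  have P1 : (1+x^2)^(r-1) = (1+x^2) * (1+x^2)^(r-2) := by
    rw [show r-1 = 1+(r-2) by ring, Real.rpow_add hp, Real.rpow_one]
  have h1 : 0 ≤ r * (1+x^2) * (1+x^2)^(r-2) := by positivity
  have h2 : 0 ≤ r*(1-r)*x^2*(1+x^2)^(r-2) :=
    mul_nonneg (mul_nonneg (mul_nonneg hr0.le (by linarith)) (sq_nonneg x)) P2.le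
  have h3 : 0 ≤ r*(1+x^2)^(r-2) := by positivity
  have h4 : 0 ≤ r*(1+r)*x^2*(1+x^2)^(r-2) := by positivity
  rw [stmtFdd, P1, abs_le]
  constructor <;> nlinarith [h1, h2, h3, h4]

lemma stmt11_mvt (f f' : ℝ → ℝ) (hf : ∀ x, HasDerivAt f (f' x) x) (p q : ℝ) (hpq : p ≠ q) :
    ∃ ξ, min p q ≤ ξ ∧ ξ ≤ max p q ∧ f q - f p = f' ξ * (q - p) := by
  rcases hpq.lt_or_gt with h|h
  · obtain ⟨ξ, hξ, heq⟩ := exists_hasDerivAt_eq_slope f f' h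
      (fun x _ => (hf x).continuousAt.continuousWithinAt) (fun x _ => hf x)
    rw [eq_div_iff (sub_ne_zero.2 h.ne')] at heq
    exact ⟨ξ, by rw [min_eq_left h.le]; exact hξ.1.le,
      by rw [max_eq_right h.le]; exact hξ.2.le, by linarith⟩
  · obtain ⟨ξ, hξ, heq⟩ := exists_hasDerivAt_eq_slope f f' h
      (fun x _ => (hf x).continuousAt.continuousWithinAt) (fun x _ => hf x)
    rw [eq_div_iff (sub_ne_zero.2 h.ne')] at heq
    exact ⟨ξ, by rw [min_eq_right h.le]; exact hξ.1.le,
      by rw [max_eq_left h.le]; exact hξ.2.le, by linarith⟩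

/-- double difference bound: for `0 < r < 1/2` there is `C > 0` such that
for all nonnegative reals with `a - b + c - d = 0`,
`|⟨a⟩^{2r} - ⟨b⟩^{2r} + ⟨c⟩^{2r} - ⟨d⟩^{2r}| ≤ C |a-b| |b-c| ⟨min{a,b,c,d}⟩^{2r-2}`. -/
theorem stmt11 (r : ℝ) (hr0 : 0 < r) (hr : r < 1/2) :
    ∃ C : ℝ, 0 < C ∧ ∀ a b c d : ℝ, 0 ≤ a → 0 ≤ b → 0 ≤ c → 0 ≤ d →
      a - b + c - d = 0 →
      |jbr a ^ (2*r) - jbr b ^ (2*r) + jbr c ^ (2*r) - jbr d ^ (2*r)|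
        ≤ C * |a - b| * |b - c| * jbr (min (min a b) (min c d)) ^ (2*r - 2) := by
  refine ⟨6*r, by positivity, ?_⟩
  intro a b c d ha hb hc hd hsum
  have hd' : d = a - b + c := by linarith
  subst hd'
  rw [stmt11_jbr1, stmt11_jbr1, stmt11_jbr1, stmt11_jbr1, stmt11_jbr2]
  set m := min (min a b) (min c (a - b + c)) with hmdef
  have hm0 : 0 ≤ m := le_min (le_min ha hb) (le_min hc hd)
  rcases eq_or_ne a b with rfl|hab
  · rw [show a - a + c = c by ring,
      show stmtF r a - stmtF r a + stmtF r c - stmtF r c = 0 by ring, abs_zero]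
    have : (0:ℝ) < (1+m^2)^(r-1) := Real.rpow_pos_of_pos (by positivity) _
    positivity
  rcases eq_or_ne b c with rfl|hbc
  · rw [show a - b + b = a by ring,
      show stmtF r a - stmtF r b + stmtF r b - stmtF r a = 0 by ring, abs_zero]
    have : (0:ℝ) < (1+m^2)^(r-1) := Real.rpow_pos_of_pos (by positivity) _
    positivity
  -- general case: two applications of the MVT
  have hg : ∀ s : ℝ, HasDerivAt (fun s => stmtF r (s + (c-b)) - stmtF r s)
      (stmtFd r (s+(c-b)) - stmtFd r s) s := by
    intro s
    have h1 : HasDerivAt (fun s : ℝ => stmtF r (s + (c-b))) (stmtFd r (s+(c-b))) s := by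
      have h := (stmt11_hF r (s+(c-b))).comp s ((hasDerivAt_id s).add_const (c-b))
      rw [mul_one] at h
      exact h
    exact h1.sub (stmt11_hF r s)
  obtain ⟨ξ, hξ1, hξ2, hξeq⟩ := stmt11_mvt _ _ hg a b hab
  obtain ⟨η, hη1, hη2, hηeq⟩ := stmt11_mvt (stmtFd r) (stmtFdd r) (stmt11_hFd r)
    ξ (ξ+(c-b)) (fun hcon => hbc (by linarith [hcon]))
  have hE : stmtF r a - stmtF r b + stmtF r c - stmtF r (a-b+c)
      = stmtFdd r η * (c - b) * (b - a) := by
    have e1 : b + (c-b) = c := by ring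
    have e2 : a + (c-b) = a - b + c := by ring
    simp only [e1, e2] at hξeq
    rw [show (ξ+(c-b)) - ξ = c - b by ring] at hηeq
    rw [hηeq] at hξeq
    linarith [hξeq]
  -- η is at least m
  have h6 : m ≤ a - b + c := le_trans (min_le_right _ _) (min_le_right _ _)
  have h7 : m ≤ c := le_trans (min_le_right _ _) (min_le_left _ _)
  have h4 : m ≤ ξ := le_trans (min_le_left _ _) hξ1
  have h5 : m ≤ ξ + (c-b) := by
    rcases le_total a b with h|h
    · have := hξ1; rw [min_eq_left h] at this; linarith
    · have := hξ1; rw [min_eq_right h] at this; linarith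
  have hηm : m ≤ η := le_trans (le_min h4 h5) hη1
  -- bound
  have hb1 : |stmtFdd r η| ≤ 6*r*(1+η^2)^(r-1) := stmt11_bound r hr0 hr η
  have hb2 : (1+η^2)^(r-1) ≤ (1+m^2)^(r-1) :=
    Real.rpow_le_rpow_of_nonpos (by positivity) (by nlinarith) (by linarith)
  have hb3 : |stmtFdd r η| ≤ 6*r*(1+m^2)^(r-1) := by
    refine le_trans hb1 ?_
    have := mul_le_mul_of_nonneg_left hb2 (by positivity : (0:ℝ) ≤ 6*r)
    linarith
  rw [hE, abs_mul, abs_mul, abs_sub_comm c b, abs_sub_comm b a]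
  calc |stmtFdd r η| * |b-c| * |a-b|
      ≤ (6*r*(1+m^2)^(r-1)) * |b-c| * |a-b| := by
        exact mul_le_mul_of_nonneg_right
          (mul_le_mul_of_nonneg_right hb3 (abs_nonneg _)) (abs_nonneg _)
    _ = 6*r * |a-b| * |b-c| * (1+m^2)^(r-1) := by ring
end

section
/- A nonzero periodic profile has infinite weighted L² norm at and above the critical weight: let h : ℝ → ℂ be measurable and 2π-periodic (h(ξ + 2π) = h(ξ) for almost every ξ), and suppose h is not almost everywhere zero. Then for every real s ≥ −1/2, one has ∫_ℝ (1 + ξ²)^{s} |h(ξ)|² dξ = ∞. -/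
open Real MeasureTheory

open scoped ENNReal NNReal

/-- translating an a.e. property. -/
lemma stmt16_ae_shift {p : ℝ → Prop} (hp : ∀ᵐ ξ ∂(volume : Measure ℝ), p ξ) (c : ℝ) :
    ∀ᵐ ξ ∂(volume : Measure ℝ), p (ξ + c) := by
  rw [← map_add_right_ae (volume : Measure ℝ) c] at hp
  exact Filter.eventually_map.mp hp

/-- shifting a set lintegral over an interval by one period. -/
lemma stmt16_shift_int (g : ℝ → ℝ≥0∞) (hg : ∀ᵐ ξ ∂(volume : Measure ℝ), g (ξ + 2 * π) = g ξ)
    (a : ℝ) :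
    ∫⁻ ξ in Set.Ico (a + 2 * π) (a + 2 * π + 2 * π), g ξ
      = ∫⁻ ξ in Set.Ico a (a + 2 * π), g ξ := by
  set P := 2 * π with hP
  calc ∫⁻ ξ in Set.Ico (a + P) (a + P + P), g ξ
      = ∫⁻ ξ, (Set.Ico (a + P) (a + P + P)).indicator g ξ :=
        (lintegral_indicator measurableSet_Ico g).symm
    _ = ∫⁻ ξ, (Set.Ico (a + P) (a + P + P)).indicator g (ξ + P) :=
        (lintegral_add_right_eq_self _ P).symm
    _ = ∫⁻ ξ, (Set.Ico a (a + P)).indicator (fun y => g (y + P)) ξ := by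
        refine lintegral_congr fun ξ => ?_
        by_cases hmem : ξ ∈ Set.Ico a (a + P)
        · have h1 : ξ + P ∈ Set.Ico (a + P) (a + P + P) := by
            simp only [Set.mem_Ico] at hmem ⊢; constructor <;> linarith [hmem.1, hmem.2]
          simp [Set.indicator_of_mem, h1, hmem]
        · have h1 : ξ + P ∉ Set.Ico (a + P) (a + P + P) := by
            simp only [Set.mem_Ico] at hmem ⊢
            intro h2; exact hmem ⟨by linarith [h2.1], by linarith [h2.2]⟩
          simp [Set.indicator_of_notMem, h1, hmem]
    _ = ∫⁻ ξ in Set.Ico a (a + P), g (ξ + P) :=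
        lintegral_indicator measurableSet_Ico _
    _ = ∫⁻ ξ in Set.Ico a (a + P), g ξ :=
        lintegral_congr_ae (ae_restrict_of_ae hg)

/-- a measurable `2π`-periodic function `h : ℝ → ℂ` that is not a.e. zero
has infinite weighted `L²` norm `∫ (1+ξ²)^s |h(ξ)|² dξ = ∞` for every real `s ≥ -1/2`. -/
theorem stmt16 (h : ℝ → ℂ) (hmeas : Measurable h)
    (hper : ∀ᵐ ξ ∂(volume : Measure ℝ), h (ξ + 2 * π) = h ξ)
    (hne : ¬ (h =ᵐ[(volume : Measure ℝ)] 0)) :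
    ∀ s : ℝ, -1/2 ≤ s →
      ∫⁻ ξ : ℝ, ENNReal.ofReal ((1 + ξ^2) ^ s * (‖h ξ‖)^2) = ⊤ := by
  intro s hs
  have hπ : 0 < π := Real.pi_pos
  have hπ7 : 2 * π ≤ 7 := by nlinarith [Real.pi_lt_d2]
  set g : ℝ → ℝ≥0∞ := fun ξ => ENNReal.ofReal ((‖h ξ‖) ^ 2) with hgdef
  have hgmeas : Measurable g := by
    have h1 : Measurable fun ξ => ‖h ξ‖ := by
      exact hmeas.norm
    exact (h1.pow_const 2).ennreal_ofReal
  have hgper : ∀ᵐ ξ ∂(volume : Measure ℝ), g (ξ + 2 * π) = g ξ :=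
    hper.mono fun ξ hξ => by simp [hgdef, hξ]
  -- the integrals over the period intervals
  set A : ℤ → ℝ≥0∞ := fun n => ∫⁻ ξ in Set.Ico (2 * π * n) (2 * π * n + 2 * π), g ξ with hAdef
  have hstep : ∀ n : ℤ, A (n + 1) = A n := by
    intro n
    have hsh := stmt16_shift_int g hgper (2 * π * n)
    have e1 : 2 * π * (((n : ℤ) : ℝ) + 1) = 2 * π * n + 2 * π := by ring
    have e2 : 2 * π * (((n : ℤ) : ℝ) + 1) + 2 * π = 2 * π * n + 2 * π + 2 * π := by ring
    show (∫⁻ ξ in Set.Ico (2 * π * ((n + 1 : ℤ) : ℝ)) (2 * π * ((n + 1 : ℤ) : ℝ) + 2 * π), g ξ)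
      = A n
    push_cast
    rw [e1]
    exact hsh
  have hA : ∀ n : ℤ, A n = A 0 := by
    intro n
    induction n using Int.induction_on with
    | zero => rfl
    | succ i ih => rw [hstep i, ih]
    | pred i ih => rw [← ih, ← hstep (-i - 1)]; norm_num
  -- the intervals are disjoint and cover ℝ
  have hdisj : Pairwise (Function.onFun Disjoint
      fun n : ℤ => Set.Ico (2 * π * (n : ℝ)) (2 * π * n + 2 * π)) := by
    intro m n hmn
    have key : ∀ m n : ℤ, m < n → Disjoint (Set.Ico (2 * π * (m : ℝ)) (2 * π * m + 2 * π))
        (Set.Ico (2 * π * (n : ℝ)) (2 * π * n + 2 * π)) := by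
      intro m n hlt
      apply Set.Ico_disjoint_Ico.2
      have : (m : ℝ) + 1 ≤ n := by exact_mod_cast Int.add_one_le_iff.2 hlt
      have h1 : 2 * π * m + 2 * π ≤ 2 * π * n := by nlinarith
      exact min_le_iff.2 (Or.inl (le_max_iff.2 (Or.inr h1)))
    rcases Ne.lt_or_gt hmn with hlt | hlt
    · exact key m n hlt
    · exact (key n m hlt).symm
  have hcover : (⋃ n : ℤ, Set.Ico (2 * π * (n : ℝ)) (2 * π * n + 2 * π)) = Set.univ := by
    ext ξ
    simp only [Set.mem_iUnion, Set.mem_Ico, Set.mem_univ, iff_true]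
    refine ⟨⌊ξ / (2 * π)⌋, ?_, ?_⟩
    · have h1 : (⌊ξ / (2 * π)⌋ : ℝ) ≤ ξ / (2 * π) := Int.floor_le _
      have h3 : 2 * π * (ξ / (2 * π)) = ξ := by field_simp
      nlinarith
    · have h2 : ξ / (2 * π) < ⌊ξ / (2 * π)⌋ + 1 := Int.lt_floor_add_one _
      have h3 : 2 * π * (ξ / (2 * π)) = ξ := by field_simp
      nlinarith
  -- positivity of the period integral
  have hA0 : A 0 ≠ 0 := by
    intro h0
    apply hne
    have hzero : ∫⁻ ξ, g ξ = 0 := by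
      rw [← setLIntegral_univ, ← hcover,
        lintegral_iUnion (fun _ => measurableSet_Ico) hdisj]
      have : ∀ n : ℤ, (∫⁻ ξ in Set.Ico (2 * π * (n : ℝ)) (2 * π * n + 2 * π), g ξ) = 0 := by
        intro n; rw [show (∫⁻ ξ in Set.Ico (2 * π * (n : ℝ)) (2 * π * n + 2 * π), g ξ) = A n
          from rfl, hA n, h0]
      simp [this]
    have hae : g =ᵐ[(volume : Measure ℝ)] 0 := (lintegral_eq_zero_iff hgmeas).1 hzero
    filter_upwards [hae] with ξ hξ
    have h1 : (‖h ξ‖) ^ 2 ≤ 0 := by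
      simpa [hgdef, ENNReal.ofReal_eq_zero] using hξ
    have h2 : (‖h ξ‖) ^ 2 = 0 := le_antisymm h1 (by positivity)
    have h3 : ‖h ξ‖ = 0 := by
      nlinarith [norm_nonneg (h ξ)]
    simpa using (norm_eq_zero.1 h3)
  -- lower bound for the weight on each interval
  have key : ∀ n : ℕ, ENNReal.ofReal ((8 * ((n : ℝ) + 1))⁻¹) * A 0 ≤
      ∫⁻ ξ in Set.Ico (2 * π * (n : ℝ)) (2 * π * n + 2 * π),
        ENNReal.ofReal ((1 + ξ ^ 2) ^ s) * g ξ := by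
    intro n
    have hbound : ∀ ξ ∈ Set.Ico (2 * π * (n : ℝ)) (2 * π * n + 2 * π),
        ENNReal.ofReal ((8 * ((n : ℝ) + 1))⁻¹) ≤ ENNReal.ofReal ((1 + ξ ^ 2) ^ s) := by
      intro ξ hξ
      rcases hξ with ⟨hξ1, hξ2⟩
      have hξ0 : 0 ≤ ξ := le_trans (by positivity) hξ1
      have hξ7 : ξ < 7 * ((n : ℝ) + 1) := by nlinarith
      have hb1 : (1 : ℝ) ≤ 1 + ξ ^ 2 := by nlinarith
      have hb2 : 1 + ξ ^ 2 ≤ (8 * ((n : ℝ) + 1)) ^ 2 := by nlinarith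
      apply ENNReal.ofReal_le_ofReal
      have step1 : (1 + ξ ^ 2) ^ (-(1/2) : ℝ) ≤ (1 + ξ ^ 2) ^ s :=
        Real.rpow_le_rpow_of_exponent_le hb1 (by linarith)
      have step2 : ((8 * ((n : ℝ) + 1)) ^ 2) ^ (-(1/2) : ℝ) ≤ (1 + ξ ^ 2) ^ (-(1/2) : ℝ) :=
        Real.rpow_le_rpow_of_nonpos (by positivity) hb2 (by norm_num)
      have hpos : (0 : ℝ) < 8 * ((n : ℝ) + 1) := by positivity
      have step3 : ((8 * ((n : ℝ) + 1)) ^ 2) ^ (-(1/2) : ℝ) = (8 * ((n : ℝ) + 1))⁻¹ := by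
        rw [← Real.rpow_natCast (8 * ((n : ℝ) + 1)) 2, ← Real.rpow_mul hpos.le,
          ← Real.rpow_neg_one (8 * ((n : ℝ) + 1))]
        norm_num
      calc (8 * ((n : ℝ) + 1))⁻¹ = ((8 * ((n : ℝ) + 1)) ^ 2) ^ (-(1/2) : ℝ) := step3.symm
        _ ≤ (1 + ξ ^ 2) ^ (-(1/2) : ℝ) := step2
        _ ≤ (1 + ξ ^ 2) ^ s := step1
    calc ENNReal.ofReal ((8 * ((n : ℝ) + 1))⁻¹) * A 0
        = ENNReal.ofReal ((8 * ((n : ℝ) + 1))⁻¹) * A (n : ℤ) := by rw [hA (n : ℤ)]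
      _ = ∫⁻ ξ in Set.Ico (2 * π * (n : ℝ)) (2 * π * n + 2 * π),
            ENNReal.ofReal ((8 * ((n : ℝ) + 1))⁻¹) * g ξ := by
          rw [lintegral_const_mul _ hgmeas]
          simp only [hAdef, Int.cast_natCast]
      _ ≤ ∫⁻ ξ in Set.Ico (2 * π * (n : ℝ)) (2 * π * n + 2 * π),
            ENNReal.ofReal ((1 + ξ ^ 2) ^ s) * g ξ := by
          refine setLIntegral_mono' measurableSet_Ico fun ξ hξ => ?_
          exact mul_le_mul_left (hbound ξ hξ) _
  -- the harmonic series diverges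
  have hharm : (∑' n : ℕ, ENNReal.ofReal ((8 * ((n : ℝ) + 1))⁻¹)) = ⊤ := by
    by_contra hfin
    set f : ℕ → ℝ≥0 := fun n => (8 * ((n : ℕ) : ℝ≥0) + 8)⁻¹ with hfdef
    have hcoe : ∀ n : ℕ, ENNReal.ofReal ((8 * ((n : ℝ) + 1))⁻¹) = (f n : ℝ≥0∞) := by
      intro n
      rw [hfdef]
      rw [← ENNReal.ofReal_coe_nnreal]
      congr 1
      push_cast
      ring_nf
    rw [tsum_congr hcoe] at hfin
    have hsumf : Summable f := ENNReal.tsum_coe_ne_top_iff_summable.1 hfin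
    have hsumr : Summable fun n : ℕ => ((f n : ℝ)) := NNReal.summable_coe.2 hsumf
    have hval : ∀ n : ℕ, ((f n : ℝ)) = (8 * ((n : ℝ) + 1))⁻¹ := by
      intro n; rw [hfdef]; push_cast; ring_nf
    rw [funext hval] at hsumr
    have hsum2 : Summable fun n : ℕ => ((n : ℝ) + 1)⁻¹ := by
      have := hsumr.mul_left 8
      refine this.congr fun n => ?_
      have hpos : (0 : ℝ) < (n : ℝ) + 1 := by positivity
      field_simp
    have hsum3 : Summable fun n : ℕ => (((n + 1 : ℕ) : ℝ))⁻¹ := by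
      refine hsum2.congr fun n => ?_; push_cast; ring
    have : Summable fun n : ℕ => ((n : ℝ))⁻¹ :=
      (summable_nat_add_iff 1).1 hsum3
    exact Real.not_summable_natCast_inv this
  -- put everything together
  rw [← top_le_iff]
  have hsplit : ∀ ξ : ℝ, ENNReal.ofReal ((1 + ξ ^ 2) ^ s * (‖h ξ‖) ^ 2)
      = ENNReal.ofReal ((1 + ξ ^ 2) ^ s) * g ξ := by
    intro ξ
    rw [hgdef, ENNReal.ofReal_mul (Real.rpow_nonneg (by positivity) s)]
  calc (⊤ : ℝ≥0∞) = (∑' n : ℕ, ENNReal.ofReal ((8 * ((n : ℝ) + 1))⁻¹)) * A 0 := by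
        rw [hharm, ENNReal.top_mul hA0]
    _ = ∑' n : ℕ, ENNReal.ofReal ((8 * ((n : ℝ) + 1))⁻¹) * A 0 :=
        ENNReal.tsum_mul_right.symm
    _ ≤ ∑' n : ℕ, ∫⁻ ξ in Set.Ico (2 * π * (n : ℝ)) (2 * π * n + 2 * π),
          ENNReal.ofReal ((1 + ξ ^ 2) ^ s) * g ξ :=
        ENNReal.tsum_le_tsum key
    _ = ∫⁻ ξ in ⋃ n : ℕ, Set.Ico (2 * π * (n : ℝ)) (2 * π * n + 2 * π),
          ENNReal.ofReal ((1 + ξ ^ 2) ^ s) * g ξ := by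
        refine (lintegral_iUnion (fun _ => measurableSet_Ico) ?_ _).symm
        intro m n hmn
        have := hdisj (show (m : ℤ) ≠ (n : ℤ) by exact_mod_cast hmn)
        simpa using this
    _ ≤ ∫⁻ ξ : ℝ, ENNReal.ofReal ((1 + ξ ^ 2) ^ s) * g ξ := by
        exact setLIntegral_le_lintegral _ _
    _ = ∫⁻ ξ : ℝ, ENNReal.ofReal ((1 + ξ ^ 2) ^ s * (‖h ξ‖) ^ 2) := by
        exact lintegral_congr fun ξ => (hsplit ξ).symm
end
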